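/- arXiv:2108.06452 — 7 statements merged into one kernel-verified Lean document; each statement's English description precedes it below -/
import Mathlib

section
/- Let X be a measurable space, n ≥ 1, K ≥ 1, let s : Fin n → X → ℝ be measurable functions with values in [0,1], let α : Fin n → ℝ be a probability vector, and define f x = ∑ i, α i * s i x and, for ω : Fin K → Fin n, g_ω x = (1/K) * ∑ j, s (ω j) x. Let D be a probability measure on X × ({0,1} with the discrete σ-algebra), let τ ∈ (0,1), and for a function F : X → ℝ define the margin m_F(x,y) = (y − τ) * (F x − τ). Then for every θ > 0: D{(x,y) : m_f(x,y) ≤ 0} ≤ ∫ D{(x,y) : m_{g_ω}(x,y) ≤ θ/2} dμ(ω) + exp(−K θ² / 2), where μ is the K-fold product of the probability mass function α on Fin n. -/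
open MeasureTheory ENNReal

/-- Hoeffding's lemma, scalar form. -/
lemma hoeff_scalar {p : ℝ} (hp0 : 0 ≤ p) (hp1 : p ≤ 1) (t : ℝ) :
    1 - p + p * Real.exp t ≤ Real.exp (p * t + t ^ 2 / 8) := by
  have hc : ∀ u : ℝ, 0 < 1 - p + p * Real.exp u := by
    intro u
    rcases lt_or_eq_of_le hp1 with h | h
    · have := mul_nonneg hp0 (Real.exp_pos u).le; linarith
    · rw [h]; simpa using Real.exp_pos u
  set F : ℝ → ℝ := fun u => p * u + u ^ 2 / 8 - Real.log (1 - p + p * Real.exp u) with hFdef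
  set F' : ℝ → ℝ := fun u => p + u / 4 - p * Real.exp u / (1 - p + p * Real.exp u) with hF'def
  have hcd : ∀ u : ℝ, HasDerivAt (fun v => 1 - p + p * Real.exp v) (p * Real.exp u) u := by
    intro u
    simpa using ((Real.hasDerivAt_exp u).const_mul p).const_add (1 - p)
  have hder : ∀ u, HasDerivAt F (F' u) u := by
    intro u
    have h1 : HasDerivAt (fun v : ℝ => p * v + v ^ 2 / 8) (p + u / 4) u := by
      have := ((hasDerivAt_id u).const_mul p).add ((hasDerivAt_pow 2 u).div_const 8)
      exact this.congr_deriv (by rw [show (2:ℕ) - 1 = 1 from rfl, pow_one]; ring)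
    exact h1.sub ((hcd u).log (hc u).ne')
  have hder2 : ∀ u, HasDerivAt F'
      (1 / 4 - (p * Real.exp u * (1 - p + p * Real.exp u) -
        p * Real.exp u * (p * Real.exp u)) / (1 - p + p * Real.exp u) ^ 2) u := by
    intro u
    have h3 : HasDerivAt (fun v : ℝ => p + v / 4) (1 / 4) u := by
      simpa using ((hasDerivAt_id u).div_const 4).const_add p
    have h4 := ((Real.hasDerivAt_exp u).const_mul p).div (hcd u) (hc u).ne'
    exact h3.sub h4
  have hF''nonneg : ∀ u : ℝ, 0 ≤ 1 / 4 - (p * Real.exp u * (1 - p + p * Real.exp u) -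
      p * Real.exp u * (p * Real.exp u)) / (1 - p + p * Real.exp u) ^ 2 := by
    intro u
    rw [sub_nonneg, div_le_iff₀ (pow_pos (hc u) 2)]
    nlinarith [sq_nonneg ((1 - p + p * Real.exp u) - 2 * (p * Real.exp u))]
  have hmono : Monotone F' := by
    refine monotone_of_deriv_nonneg (fun u => (hder2 u).differentiableAt) fun u => ?_
    rw [(hder2 u).deriv]
    exact hF''nonneg u
  have hF'0 : F' 0 = 0 := by
    simp only [hF'def]
    norm_num [Real.exp_zero]
  have hF0 : F 0 = 0 := by
    have h1 : (1 : ℝ) - p + p * Real.exp 0 = 1 := by simp [Real.exp_zero]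
    simp [hFdef, h1]
  have hFnonneg : ∀ u, 0 ≤ F u := by
    intro u
    rcases le_or_gt 0 u with h | h
    · have := monotoneOn_of_deriv_nonneg (convex_Ici 0)
        (Continuous.continuousOn (Differentiable.continuous (fun u => (hder u).differentiableAt)))
        (fun x _ => ((hder x).differentiableAt).differentiableWithinAt)
        (fun x hx => by
          rw [(hder x).deriv]
          have : (0:ℝ) ≤ x := le_of_lt (by simpa using hx)
          calc (0:ℝ) = F' 0 := hF'0.symm
            _ ≤ F' x := hmono this)
      have := this (Set.self_mem_Ici) (show u ∈ Set.Ici (0:ℝ) from h) h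
      rw [hF0] at this; exact this
    · have := antitoneOn_of_deriv_nonpos (convex_Iic 0)
        (Continuous.continuousOn (Differentiable.continuous (fun u => (hder u).differentiableAt)))
        (fun x _ => ((hder x).differentiableAt).differentiableWithinAt)
        (fun x hx => by
          rw [(hder x).deriv]
          have : x ≤ (0:ℝ) := le_of_lt (by simpa using hx)
          calc F' x ≤ F' 0 := hmono this
            _ = 0 := hF'0)
      have := this (show u ∈ Set.Iic (0:ℝ) from h.le) (Set.self_mem_Iic) h.le
      rw [hF0] at this; exact this
  have hlog : Real.log (1 - p + p * Real.exp t) ≤ p * t + t ^ 2 / 8 := by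
    have := hFnonneg t
    simp only [hFdef] at this
    linarith
  calc 1 - p + p * Real.exp t = Real.exp (Real.log (1 - p + p * Real.exp t)) :=
        (Real.exp_log (hc t)).symm
    _ ≤ Real.exp (p * t + t ^ 2 / 8) := Real.exp_le_exp.2 hlog

/-- Centered mgf bound for a `[0,1]`-valued discrete random variable. -/
lemma mgf_bound {n : ℕ} (α : Fin n → ℝ) (hα0 : ∀ i, 0 ≤ α i) (hα1 : ∑ i, α i = 1)
    (v : Fin n → ℝ) (hv : ∀ i, v i ∈ Set.Icc (0 : ℝ) 1) (t : ℝ) :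
    ∑ i, α i * Real.exp (t * (v i - ∑ i, α i * v i)) ≤ Real.exp (t ^ 2 / 8) := by
  set m : ℝ := ∑ i, α i * v i with hm
  have hm0 : 0 ≤ m := Finset.sum_nonneg fun i _ => mul_nonneg (hα0 i) (hv i).1
  have hm1 : m ≤ 1 := by
    calc m ≤ ∑ i, α i := Finset.sum_le_sum fun i _ => by
            nlinarith [(hv i).2, hα0 i]
      _ = 1 := hα1
  have hconv : ∀ i, Real.exp (t * v i) ≤ 1 - v i + v i * Real.exp t := by
    intro i
    have h := convexOn_exp.2 (Set.mem_univ 0) (Set.mem_univ t)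
      (by linarith [(hv i).2] : (0:ℝ) ≤ 1 - v i) (hv i).1 (by ring)
    simp only [smul_eq_mul, mul_zero, zero_add, Real.exp_zero, mul_one] at h
    rw [mul_comm t]; exact h
  calc ∑ i, α i * Real.exp (t * (v i - m))
      = ∑ i, (α i * Real.exp (t * v i)) * Real.exp (-(t * m)) := by
        refine Finset.sum_congr rfl fun i _ => ?_
        rw [mul_assoc, ← Real.exp_add]
        ring_nf
    _ = (∑ i, α i * Real.exp (t * v i)) * Real.exp (-(t * m)) := by
        rw [← Finset.sum_mul]
    _ ≤ (1 - m + m * Real.exp t) * Real.exp (-(t * m)) := by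
        refine mul_le_mul_of_nonneg_right ?_ (Real.exp_pos _).le
        calc ∑ i, α i * Real.exp (t * v i)
            ≤ ∑ i, (α i - α i * v i + (α i * v i) * Real.exp t) := by
              refine Finset.sum_le_sum fun i _ => ?_
              have := hconv i
              nlinarith [hα0 i]
          _ = 1 - m + m * Real.exp t := by
              rw [Finset.sum_add_distrib, Finset.sum_sub_distrib, hα1, ← Finset.sum_mul, ← hm]
    _ ≤ Real.exp (m * t + t ^ 2 / 8) * Real.exp (-(t * m)) :=
        mul_le_mul_of_nonneg_right (hoeff_scalar hm0 hm1 t) (Real.exp_pos _).le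
    _ = Real.exp (t ^ 2 / 8) := by
        rw [← Real.exp_add]; ring_nf

/-- One-sided Hoeffding/Chernoff bound for the weighted count of `K`-tuples whose
empirical mean deviates upward from the true mean by at least `θ/2`. -/
lemma chernoff_bound {n K : ℕ} (α : Fin n → ℝ) (hα0 : ∀ i, 0 ≤ α i) (hα1 : ∑ i, α i = 1)
    (v : Fin n → ℝ) (hv : ∀ i, v i ∈ Set.Icc (0 : ℝ) 1) (θ : ℝ) (hθ : 0 < θ) :
    ∑ ω ∈ Finset.univ.filter
        (fun ω : Fin K → Fin n =>
          (K : ℝ) * (θ / 2) ≤ (∑ j, v (ω j)) - K * ∑ i, α i * v i),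
      ∏ j, α (ω j) ≤ Real.exp (-((K : ℝ) * θ ^ 2) / 2) := by
  classical
  set t : ℝ := 2 * θ with ht
  set m : ℝ := ∑ i, α i * v i with hm
  have hsum_eq : ∀ ω : Fin K → Fin n,
      ∑ j, t * (v (ω j) - m) = t * ((∑ j, v (ω j)) - (K : ℝ) * m) := by
    intro ω
    rw [← Finset.mul_sum, Finset.sum_sub_distrib, Finset.sum_const, Finset.card_univ,
      Fintype.card_fin, nsmul_eq_mul]
  calc ∑ ω ∈ Finset.univ.filter
        (fun ω : Fin K → Fin n =>
          (K : ℝ) * (θ / 2) ≤ (∑ j, v (ω j)) - K * m), ∏ j, α (ω j)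
      ≤ ∑ ω ∈ Finset.univ.filter
        (fun ω : Fin K → Fin n =>
          (K : ℝ) * (θ / 2) ≤ (∑ j, v (ω j)) - K * m),
          Real.exp (-(t * ((K : ℝ) * (θ / 2)))) *
            ∏ j, (α (ω j) * Real.exp (t * (v (ω j) - m))) := by
        refine Finset.sum_le_sum fun ω hω => ?_
        have hcond := (Finset.mem_filter.1 hω).2
        have hπ : (0:ℝ) ≤ ∏ j, α (ω j) := Finset.prod_nonneg fun j _ => hα0 (ω j)
        rw [Finset.prod_mul_distrib, ← Real.exp_sum, hsum_eq ω, ← mul_assoc,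
          mul_comm (Real.exp _) (∏ j, α (ω j)), mul_assoc, ← Real.exp_add]
        refine le_mul_of_one_le_right hπ (Real.one_le_exp ?_)
        nlinarith
    _ ≤ ∑ ω : Fin K → Fin n,
          Real.exp (-(t * ((K : ℝ) * (θ / 2)))) *
            ∏ j, (α (ω j) * Real.exp (t * (v (ω j) - m))) := by
        refine Finset.sum_le_sum_of_subset_of_nonneg (Finset.filter_subset _ _)
          fun ω _ _ => ?_
        exact mul_nonneg (Real.exp_pos _).le
          (Finset.prod_nonneg fun j _ => mul_nonneg (hα0 (ω j)) (Real.exp_pos _).le)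
    _ = Real.exp (-(t * ((K : ℝ) * (θ / 2)))) *
          (∑ i, α i * Real.exp (t * (v i - m))) ^ K := by
        rw [← Finset.mul_sum]
        congr 1
        rw [← Fintype.piFinset_univ,
          ← Finset.prod_univ_sum (fun _ : Fin K => (Finset.univ : Finset (Fin n)))
            (fun _ i => α i * Real.exp (t * (v i - m)))]
        simp [Finset.prod_const]
    _ ≤ Real.exp (-(t * ((K : ℝ) * (θ / 2)))) * Real.exp (t ^ 2 / 8) ^ K := by
        refine mul_le_mul_of_nonneg_left ?_ (Real.exp_pos _).le
        refine pow_le_pow_left₀ ?_ (mgf_bound α hα0 hα1 v hv t) K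
        exact Finset.sum_nonneg fun i _ => mul_nonneg (hα0 i) (Real.exp_pos _).le
    _ = Real.exp (-((K : ℝ) * θ ^ 2) / 2) := by
        rw [← Real.exp_nat_mul, ← Real.exp_add]
        congr 1
        ring


/-- First step of the margin-based generalization analysis: the `D`-probability of a
nonpositive margin of the convex combination `f` is bounded by the expected
`D`-probability of a margin at most `θ/2` for a random `K`-fold average `g_ω`
(indices drawn i.i.d. from the probability mass function `α`), plus a Hoeffding
concentration term.  Labels take values in `{0,1}` (coded as `Fin 2` with the
discrete σ-algebra) and the margin of `F` at `(x,y)` is `(y - τ) * (F x - τ)`. -/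
theorem adaGNN_margin_true_error_step
    {X : Type*} [MeasurableSpace X]
    (n K : ℕ) (hn : 1 ≤ n) (hK : 1 ≤ K)
    (s : Fin n → X → ℝ) (hmeas : ∀ i, Measurable (s i))
    (hs : ∀ i x, s i x ∈ Set.Icc (0 : ℝ) 1)
    (α : Fin n → ℝ) (hα0 : ∀ i, 0 ≤ α i) (hα1 : ∑ i, α i = 1)
    (f : X → ℝ) (hf : ∀ x, f x = ∑ i, α i * s i x)
    (g : (Fin K → Fin n) → X → ℝ)
    (hg : ∀ ω x, g ω x = (1 / (K : ℝ)) * ∑ j, s (ω j) x)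
    (D : Measure (X × Fin 2)) [IsProbabilityMeasure D]
    (τ : ℝ) (hτ : τ ∈ Set.Ioo (0 : ℝ) 1)
    (margin : (X → ℝ) → X × Fin 2 → ℝ)
    (hmargin : ∀ F p, margin F p = (((p.2 : ℕ) : ℝ) - τ) * (F p.1 - τ))
    (μ : Measure (Fin K → Fin n))
    (hμ : μ = Measure.pi fun _ : Fin K =>
      ∑ i : Fin n, ENNReal.ofReal (α i) • Measure.dirac i)
    (θ : ℝ) (hθ : 0 < θ) :
    D {p | margin f p ≤ 0} ≤
      (∫⁻ ω, D {p | margin (g ω) p ≤ θ / 2} ∂μ) +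
        ENNReal.ofReal (Real.exp (-(K * θ ^ 2) / 2)) := by
  classical
  obtain ⟨hτ0, hτ1⟩ := hτ
  have hK0 : (0:ℝ) < K := by exact_mod_cast hK
  -- measurability
  have hfm : Measurable f := by
    have hfe : f = fun x => ∑ i, α i * s i x := funext hf
    rw [hfe]
    exact Finset.measurable_sum _ fun i _ => (hmeas i).const_mul (α i)
  have hgm : ∀ ω, Measurable (g ω) := by
    intro ω
    have hge : g ω = fun x => (1 / (K:ℝ)) * ∑ j, s (ω j) x := funext (hg ω)
    rw [hge]
    exact (Finset.measurable_sum _ fun j _ => hmeas (ω j)).const_mul _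
  have hmargm : ∀ F : X → ℝ, Measurable F → Measurable (margin F) := by
    intro F hF
    have hme : margin F = fun p : X × Fin 2 => (((p.2 : ℕ) : ℝ) - τ) * (F p.1 - τ) :=
      funext (hmargin F)
    rw [hme]
    have h2 : Measurable fun p : X × Fin 2 => (((p.2 : ℕ) : ℝ)) :=
      (measurable_of_countable (fun y : Fin 2 => ((y : ℕ) : ℝ))).comp measurable_snd
    exact (h2.sub measurable_const).mul ((hF.comp measurable_fst).sub measurable_const)
  set A : (Fin K → Fin n) → Set (X × Fin 2) := fun ω => {p | margin (g ω) p ≤ θ / 2} with hA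
  have hAmeas : ∀ ω, MeasurableSet (A ω) := fun ω =>
    measurableSet_le (hmargm _ (hgm ω)) measurable_const
  have hbadmeas : MeasurableSet {p : X × Fin 2 | margin f p ≤ 0} :=
    measurableSet_le (hmargm _ hfm) measurable_const
  -- weights
  set W : (Fin K → Fin n) → ℝ≥0∞ := fun ω => ENNReal.ofReal (∏ j, α (ω j)) with hW
  set ν : Measure (Fin n) := ∑ i : Fin n, ENNReal.ofReal (α i) • Measure.dirac i with hν
  have hνs : ∀ i : Fin n, ν {i} = ENNReal.ofReal (α i) := by
    intro i
    rw [hν, Measure.finset_sum_apply]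
    simp only [Measure.smul_apply, smul_eq_mul, Measure.dirac_apply]
    rw [Finset.sum_eq_single i]
    · simp
    · intro b _ hb; simp [Set.indicator_apply, hb]
    · simp
  haveI hνprob : IsProbabilityMeasure ν := by
    constructor
    rw [hν, Measure.finset_sum_apply]
    simp only [Measure.smul_apply, smul_eq_mul, measure_univ, mul_one]
    rw [← ENNReal.ofReal_sum_of_nonneg (fun i _ => hα0 i), hα1, ENNReal.ofReal_one]
  haveI hμprob : IsProbabilityMeasure μ := by rw [hμ]; infer_instance
  have hsingle : ∀ ω : Fin K → Fin n, μ {ω} = W ω := by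
    intro ω
    have huniv : ({ω} : Set (Fin K → Fin n)) = Set.pi Set.univ fun j => {ω j} :=
      (Set.univ_pi_singleton ω).symm
    rw [hμ, huniv, Measure.pi_pi]
    simp only [hνs, hW]
    exact (ENNReal.ofReal_prod_of_nonneg (fun j _ => hα0 (ω j))).symm
  have hQ : ∀ Q : (Fin K → Fin n) → Prop,
      μ {ω | Q ω} = ∑ ω ∈ Finset.univ.filter Q, W ω := by
    intro Q
    have hcover : {ω | Q ω} = ⋃ ω ∈ Finset.univ.filter Q, ({ω} : Set (Fin K → Fin n)) := by
      ext x; simp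
    have hd : Set.PairwiseDisjoint (↑(Finset.univ.filter Q))
        (fun ω : Fin K → Fin n => ({ω} : Set (Fin K → Fin n))) :=
      fun a _ b _ hab => Set.disjoint_singleton.2 hab
    rw [hcover, measure_biUnion_finset hd fun ω _ => measurableSet_singleton ω]
    exact Finset.sum_congr rfl fun ω _ => hsingle ω
  -- tail bound
  have htail : ∀ u : Fin n → ℝ, (∀ i, u i ∈ Set.Icc (0:ℝ) 1) → ∀ S : Set (Fin K → Fin n),
      (∀ ω ∈ S, (K : ℝ) * (θ / 2) ≤ (∑ j, u (ω j)) - K * ∑ i, α i * u i) →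
      μ S ≤ ENNReal.ofReal (Real.exp (-(K * θ ^ 2) / 2)) := by
    intro u hu S hS
    calc μ S ≤ μ {ω | (K : ℝ) * (θ / 2) ≤ (∑ j, u (ω j)) - K * ∑ i, α i * u i} :=
          measure_mono hS
      _ = ∑ ω ∈ Finset.univ.filter
            (fun ω : Fin K → Fin n =>
              (K : ℝ) * (θ / 2) ≤ (∑ j, u (ω j)) - K * ∑ i, α i * u i), W ω := hQ _
      _ = ENNReal.ofReal (∑ ω ∈ Finset.univ.filter
            (fun ω : Fin K → Fin n =>
              (K : ℝ) * (θ / 2) ≤ (∑ j, u (ω j)) - K * ∑ i, α i * u i),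
            ∏ j, α (ω j)) :=
          (ENNReal.ofReal_sum_of_nonneg fun ω _ =>
            Finset.prod_nonneg fun j _ => hα0 (ω j)).symm
      _ ≤ ENNReal.ofReal (Real.exp (-(K * θ ^ 2) / 2)) :=
          ENNReal.ofReal_le_ofReal (chernoff_bound α hα0 hα1 u hu θ hθ)
  -- pointwise bad-margin tail
  have hpoint : ∀ p : X × Fin 2, margin f p ≤ 0 →
      μ {ω | ¬ margin (g ω) p ≤ θ / 2} ≤
        ENNReal.ofReal (Real.exp (-(K * θ ^ 2) / 2)) := by
    intro p hp
    set c : ℝ := ((p.2 : ℕ) : ℝ) - τ with hcdef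
    have hgt : ∀ ω, ¬ margin (g ω) p ≤ θ/2 → θ/2 < c * (g ω p.1 - f p.1) := by
      intro ω h
      push_neg at h
      have hcg : c * (g ω p.1 - f p.1) = margin (g ω) p - margin f p := by
        rw [hmargin, hmargin, hcdef]; ring
      rw [hcg]; linarith
    have hsK : ∀ ω : Fin K → Fin n, (∑ j, s (ω j) p.1) = K * g ω p.1 := by
      intro ω; rw [hg]; field_simp
    have hy : ((p.2 : ℕ)) = 0 ∨ ((p.2 : ℕ)) = 1 := by
      have := p.2.isLt; omega
    rcases hy with hy | hy
    · -- label 0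
      have hc' : c = -τ := by rw [hcdef, hy]; norm_num
      refine htail (fun i => 1 - s i p.1)
        (fun i => by
          simp only [Set.mem_Icc]
          constructor <;> nlinarith [(hs i p.1).1, (hs i p.1).2]) _ ?_
      intro ω hω
      have h2 := hgt ω hω
      rw [hc'] at h2
      have hτd : 0 < τ * (f p.1 - g ω p.1) := by nlinarith
      have hd : 0 < f p.1 - g ω p.1 := by
        rcases mul_pos_iff.1 hτd with ⟨_, h⟩ | ⟨h, _⟩
        · exact h
        · linarith
      have h3 : θ/2 < f p.1 - g ω p.1 := by nlinarith
      have e1 : (∑ j : Fin K, (1 - s (ω j) p.1)) = K - K * g ω p.1 := by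
        rw [Finset.sum_sub_distrib, Finset.sum_const, Finset.card_univ, Fintype.card_fin,
          nsmul_eq_mul, mul_one, hsK ω]
      have e2 : (∑ i, α i * (1 - s i p.1)) = 1 - f p.1 := by
        simp only [mul_sub, mul_one]
        rw [Finset.sum_sub_distrib, hα1, ← hf p.1]
      rw [e1, e2]
      nlinarith
    · -- label 1
      have hc' : c = 1 - τ := by rw [hcdef, hy]; norm_num
      refine htail (fun i => s i p.1) (fun i => hs i p.1) _ ?_
      intro ω hω
      have h2 := hgt ω hω
      rw [hc'] at h2
      have hτd : 0 < (1 - τ) * (g ω p.1 - f p.1) := by nlinarith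
      have hd : 0 < g ω p.1 - f p.1 := by
        rcases mul_pos_iff.1 hτd with ⟨_, h⟩ | ⟨h, _⟩
        · exact h
        · linarith
      have h3 : θ/2 < g ω p.1 - f p.1 := by nlinarith
      have e2 : (∑ i, α i * s i p.1) = f p.1 := (hf p.1).symm
      rw [hsK ω, e2]
      nlinarith
  -- pointwise indicator bound
  have hptwise : ∀ p : X × Fin 2,
      Set.indicator {p | margin f p ≤ 0} 1 p ≤
        (∑ ω : Fin K → Fin n, W ω * Set.indicator (A ω) 1 p) +
          ENNReal.ofReal (Real.exp (-(K * θ ^ 2) / 2)) := by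
    intro p
    by_cases hp : margin f p ≤ 0
    · rw [Set.indicator_of_mem (show p ∈ {p | margin f p ≤ 0} from hp)]
      have h1 : (1:ℝ≥0∞) ≤ μ {ω | margin (g ω) p ≤ θ/2} +
          μ {ω | margin (g ω) p ≤ θ/2}ᶜ := by
        have h := measure_union_le (μ := μ) {ω | margin (g ω) p ≤ θ/2}
          {ω | margin (g ω) p ≤ θ/2}ᶜ
        rwa [Set.union_compl_self, measure_univ] at h
      have h2 : μ {ω | margin (g ω) p ≤ θ/2}ᶜ ≤
          ENNReal.ofReal (Real.exp (-(K * θ ^ 2) / 2)) := by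
        rw [Set.compl_setOf]
        exact hpoint p hp
      have h3 : μ {ω | margin (g ω) p ≤ θ/2} =
          ∑ ω : Fin K → Fin n, W ω * Set.indicator (A ω) 1 p := by
        rw [hQ (fun ω => margin (g ω) p ≤ θ/2), Finset.sum_filter]
        refine Finset.sum_congr rfl fun ω _ => ?_
        by_cases h : margin (g ω) p ≤ θ / 2
        · rw [if_pos h, Set.indicator_of_mem (show p ∈ A ω from h), Pi.one_apply, mul_one]
        · rw [if_neg h, Set.indicator_of_notMem (show p ∉ A ω from h), mul_zero]
      calc (1:ℝ≥0∞) ≤ _ := h1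
        _ ≤ _ := add_le_add h3.le h2
    · rw [Set.indicator_of_notMem (show p ∉ {p | margin f p ≤ 0} from hp)]
      exact zero_le
  -- main chain
  calc D {p | margin f p ≤ 0}
      = ∫⁻ p, Set.indicator {p | margin f p ≤ 0} 1 p ∂D :=
        (lintegral_indicator_one hbadmeas).symm
    _ ≤ ∫⁻ p, ((∑ ω : Fin K → Fin n, W ω * Set.indicator (A ω) 1 p) +
          ENNReal.ofReal (Real.exp (-(K * θ ^ 2) / 2))) ∂D := lintegral_mono hptwise
    _ = (∑ ω : Fin K → Fin n, W ω * D (A ω)) +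
          ENNReal.ofReal (Real.exp (-(K * θ ^ 2) / 2)) := by
        rw [lintegral_add_right _ measurable_const, lintegral_const, measure_univ, mul_one,
          lintegral_finset_sum _
            (fun ω _ => (measurable_one.indicator (hAmeas ω)).const_mul _)]
        congr 1
        refine Finset.sum_congr rfl fun ω _ => ?_
        rw [lintegral_const_mul _ (measurable_one.indicator (hAmeas ω)),
          lintegral_indicator_one (hAmeas ω)]
    _ = (∫⁻ ω, D (A ω) ∂μ) + ENNReal.ofReal (Real.exp (-(K * θ ^ 2) / 2)) := by
        congr 1
        rw [lintegral_fintype]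
        exact Finset.sum_congr rfl fun ω _ => by rw [hsingle ω, mul_comm]
end

section
/- Let I be a nonempty finite index set, let w : I → ℝ with w i > 0 for all i, and let u : I → ℝ with u i ∈ {−1, 1} for all i. Let W = ∑ i, w i, let ε = (∑ i with u i = −1, w i) / W, and assume 0 < ε < 1. Then the function φ : ℝ → ℝ defined by φ(a) = ∑ i, w i * exp(−a * u i) attains its global minimum over ℝ exactly at a* = (1/2) * ln((1 − ε)/ε), and the minimum value is φ(a*) = 2 * √(ε * (1 − ε)) * W. -/
set_option maxHeartbeats 1000000

/-- The weighted exponential loss `φ a = ∑ i, w i * exp (-a * u i)` (with positive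
weights `w i` and agreement indicators `u i ∈ {-1, 1}`) attains its global minimum
over `ℝ` exactly at `a* = (1/2) * log ((1 - ε)/ε)`, where `ε` is the weighted
misclassification error, and the minimum value is `2 * √(ε * (1 - ε)) * W`. -/
theorem adaGNN_adaboost_optimal_coefficient
    {I : Type*} [Fintype I] [Nonempty I]
    (w u : I → ℝ) (hw : ∀ i, 0 < w i) (hu : ∀ i, u i = -1 ∨ u i = 1)
    (W ε aStar : ℝ) (hW : W = ∑ i, w i)
    (hε : ε = (∑ i ∈ Finset.univ.filter fun i => u i = -1, w i) / W)
    (hε0 : 0 < ε) (hε1 : ε < 1)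
    (haStar : aStar = (1 / 2) * Real.log ((1 - ε) / ε))
    (φ : ℝ → ℝ) (hφ : ∀ a, φ a = ∑ i, w i * Real.exp (-a * u i)) :
    (∀ a, φ aStar ≤ φ a) ∧
      (∀ a, φ a = φ aStar → a = aStar) ∧
      φ aStar = 2 * Real.sqrt (ε * (1 - ε)) * W := by
  have hWpos : 0 < W := hW ▸ Finset.sum_pos (fun i _ => hw i) Finset.univ_nonempty
  set A := ε * W with hA
  set B := (1 - ε) * W with hB
  have hApos : 0 < A := mul_pos hε0 hWpos
  have hBpos : 0 < B := mul_pos (by linarith) hWpos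
  have hAB : A + B = W := by rw [hA, hB]; ring
  have hSA : (∑ i ∈ Finset.univ.filter fun i => u i = -1, w i) = A := by
    rw [hA, hε, div_mul_cancel₀ _ hWpos.ne']
  have hsplit := Finset.sum_filter_add_sum_filter_not Finset.univ (fun i => u i = -1) w
  have hTB : (∑ i ∈ Finset.univ.filter fun i => ¬ u i = -1, w i) = B := by
    rw [hSA, ← hW] at hsplit; linarith
  -- closed form for φ
  have hsum : ∀ a, φ a = A * Real.exp a + B * Real.exp (-a) := by
    intro a
    rw [hφ, ← Finset.sum_filter_add_sum_filter_not Finset.univ (fun i => u i = -1),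
      ← hSA, ← hTB, Finset.sum_mul, Finset.sum_mul]
    congr 1
    · refine Finset.sum_congr rfl fun i hi => ?_
      simp only [Finset.mem_filter] at hi
      rw [hi.2, show -a * (-1 : ℝ) = a by ring]
    · refine Finset.sum_congr rfl fun i hi => ?_
      simp only [Finset.mem_filter] at hi
      rw [(hu i).resolve_left hi.2, show -a * (1 : ℝ) = -a by ring]
  set sa := Real.sqrt A with hsa
  set sb := Real.sqrt B with hsb
  have hsa2 : sa ^ 2 = A := Real.sq_sqrt hApos.le
  have hsb2 : sb ^ 2 = B := Real.sq_sqrt hBpos.le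
  have hsapos : 0 < sa := Real.sqrt_pos.mpr hApos
  have hsbpos : 0 < sb := Real.sqrt_pos.mpr hBpos
  have hBA : B / A = (1 - ε) / ε := by
    rw [hA, hB, mul_div_mul_right _ _ hWpos.ne']
  have he : Real.exp aStar = sb / sa := by
    have h1 : Real.exp aStar ^ 2 = B / A := by
      rw [sq, ← Real.exp_add, haStar, ← hBA,
        show 1 / 2 * Real.log (B / A) + 1 / 2 * Real.log (B / A) = Real.log (B / A) by ring]
      exact Real.exp_log (div_pos hBpos hApos)
    have h2 : (sb / sa) ^ 2 = B / A := by rw [div_pow, hsa2, hsb2]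
    nlinarith [Real.exp_pos aStar, div_pos hsbpos hsapos]
  have hestar : φ aStar = 2 * sa * sb := by
    rw [hsum, he, Real.exp_neg, he]
    field_simp
    nlinarith [hsa2, hsb2]
  have key : ∀ a, φ a - 2 * sa * sb =
      (sa * Real.exp (a / 2) - sb * Real.exp (-(a / 2))) ^ 2 := by
    intro a
    have hx : Real.exp (a / 2) * Real.exp (-(a / 2)) = 1 := by
      rw [← Real.exp_add]; simp
    have hx2 : Real.exp (a / 2) ^ 2 = Real.exp a := by
      rw [sq, ← Real.exp_add]; ring_nf
    have hy2 : Real.exp (-(a / 2)) ^ 2 = Real.exp (-a) := by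
      rw [sq, ← Real.exp_add]; ring_nf
    rw [hsum]
    have hr : (sa * Real.exp (a / 2) - sb * Real.exp (-(a / 2))) ^ 2 =
        sa ^ 2 * Real.exp (a / 2) ^ 2 + sb ^ 2 * Real.exp (-(a / 2)) ^ 2 -
          2 * sa * sb * (Real.exp (a / 2) * Real.exp (-(a / 2))) := by ring
    rw [hr, hx, hsa2, hsb2, hx2, hy2]; ring
  refine ⟨fun a => ?_, fun a hmin => ?_, ?_⟩
  · linarith [key a, sq_nonneg (sa * Real.exp (a / 2) - sb * Real.exp (-(a / 2))), hestar]
  · -- equality case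
    have h0 : (sa * Real.exp (a / 2) - sb * Real.exp (-(a / 2))) ^ 2 = 0 := by
      have hk := key a
      rw [hmin, hestar] at hk
      linarith
    have h1 : sa * Real.exp (a / 2) = sb * Real.exp (-(a / 2)) := by
      have := pow_eq_zero_iff (n := 2) (by norm_num) |>.mp h0
      linarith
    have hx : Real.exp (a / 2) * Real.exp (-(a / 2)) = 1 := by
      rw [← Real.exp_add]; simp
    have hx2 : Real.exp (a / 2) ^ 2 = Real.exp a := by
      rw [sq, ← Real.exp_add]; ring_nf
    have h2 : Real.exp a = sb / sa := by
      have := mul_pos (Real.exp_pos (a/2)) (Real.exp_pos (-(a/2)))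
      field_simp
      nlinarith [Real.exp_pos (a/2), Real.exp_pos (-(a/2))]
    have : Real.exp a = Real.exp aStar := by rw [h2, he]
    exact Real.exp_injective this
  · rw [hestar]
    have : sa * sb = Real.sqrt (ε * (1 - ε)) * W := by
      rw [hsa, hsb, hA, hB, ← Real.sqrt_mul (mul_pos hε0 hWpos).le,
        show ε * W * ((1 - ε) * W) = ε * (1 - ε) * (W * W) by ring,
        Real.sqrt_mul (by nlinarith : (0:ℝ) ≤ ε * (1 - ε)), Real.sqrt_mul_self hWpos.le]
    rw [mul_assoc, this]; ring
end

section
/- Let m ≥ 1 and T ≥ 1 be natural numbers and let u : Fin T → Fin m → ℝ satisfy u t i ∈ {−1, 1} for all t, i. Define weights D : Fin (T+1) → Fin m → ℝ recursively by D 0 i = 1/m and D (t+1) i = D t i * exp(−α t * u t i) / Z t, where ε t = ∑ i with u t i = −1, D t i, assumed to satisfy 0 < ε t < 1 for every t, α t = (1/2) * ln((1 − ε t)/(ε t)), and Z t = ∑ i, D t i * exp(−α t * u t i). Then the fraction of indices i ∈ Fin m with ∑ t, α t * u t i ≤ 0 is at most ∏ t, 2 * √(ε t * (1 − ε t)). 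-/
/-- Classical AdaBoost training-error bound: with boosting weights `D` initialized
uniformly and updated by `D (t+1) i = D t i * exp (-α t * u t i) / Z t`, where
`u t i ∈ {-1, 1}` records whether weak learner `t` classifies sample `i` correctly,
`ε t` is the weighted error, `α t = (1/2) log ((1 - ε t)/ε t)` and `Z t` the
normalizer, the fraction of training points misclassified by the combined classifier
(those with `∑ t, α t * u t i ≤ 0`) is at most `∏ t, 2 * √(ε t * (1 - ε t))`. -/
theorem adaGNN_adaboost_training_error_bound
    (m T : ℕ) (hm : 1 ≤ m) (hT : 1 ≤ T)
    (u : Fin T → Fin m → ℝ) (hu : ∀ t i, u t i = -1 ∨ u t i = 1)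
    (D : Fin (T + 1) → Fin m → ℝ)
    (ε α Z : Fin T → ℝ)
    (hD0 : ∀ i, D 0 i = 1 / m)
    (hε : ∀ t, ε t = ∑ i ∈ Finset.univ.filter fun i => u t i = -1, D t.castSucc i)
    (hε0 : ∀ t, 0 < ε t) (hε1 : ∀ t, ε t < 1)
    (hα : ∀ t, α t = (1 / 2) * Real.log ((1 - ε t) / ε t))
    (hZ : ∀ t, Z t = ∑ i, D t.castSucc i * Real.exp (-(α t) * u t i))
    (hD : ∀ t i, D t.succ i = D t.castSucc i * Real.exp (-(α t) * u t i) / Z t) :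
    ((Finset.univ.filter fun i : Fin m => (∑ t, α t * u t i) ≤ 0).card : ℝ) / m ≤
      ∏ t, 2 * Real.sqrt (ε t * (1 - ε t)) := by
  have hm0 : (0:ℝ) < (m : ℝ) := by exact_mod_cast Nat.lt_of_lt_of_le Nat.zero_lt_one hm
  haveI : NeZero m := ⟨by omega⟩
  have hne : (Finset.univ : Finset (Fin m)).Nonempty := Finset.univ_nonempty
  -- positivity of D
  have hpos : ∀ t : Fin (T+1), ∀ i, 0 < D t i := by
    intro t
    induction t using Fin.induction with
    | zero => intro i; rw [hD0]; positivity
    | succ t ih =>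
      have hZt : 0 < Z t := by
        rw [hZ]
        exact Finset.sum_pos (fun i _ => mul_pos (ih i) (Real.exp_pos _)) hne
      intro i
      rw [hD t i]
      exact div_pos (mul_pos (ih i) (Real.exp_pos _)) hZt
  have hZpos : ∀ t, 0 < Z t := by
    intro t
    rw [hZ]
    exact Finset.sum_pos (fun i _ => mul_pos (hpos _ i) (Real.exp_pos _)) hne
  -- normalization
  have hsum : ∀ t : Fin (T+1), ∑ i, D t i = 1 := by
    intro t
    induction t using Fin.induction with
    | zero =>
      simp only [hD0]
      rw [Finset.sum_const, Finset.card_univ, Fintype.card_fin, nsmul_eq_mul]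
      field_simp
    | succ t ih =>
      have : ∑ i, D t.succ i = (∑ i, D t.castSucc i * Real.exp (-(α t) * u t i)) / Z t := by
        rw [Finset.sum_div]; exact Finset.sum_congr rfl fun i _ => hD t i
      rw [this, ← hZ, div_self (hZpos t).ne']
  -- value of Z
  have hZval : ∀ t, Z t = 2 * Real.sqrt (ε t * (1 - ε t)) := by
    intro t
    have he0 := hε0 t
    have he1 := hε1 t
    have hx : (0:ℝ) < (1 - ε t) / ε t := div_pos (by linarith) he0
    have hexp : Real.exp (α t) = Real.sqrt ((1 - ε t) / ε t) := by
      rw [hα, Real.sqrt_eq_rpow, Real.rpow_def_of_pos hx]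
      ring_nf
    have hexpneg : Real.exp (-(α t)) = Real.sqrt (ε t / (1 - ε t)) := by
      rw [Real.exp_neg, hexp, ← Real.sqrt_inv, inv_div]
    have hsplit := Finset.sum_filter_add_sum_filter_not Finset.univ
      (fun i => u t i = -1) (fun i => D t.castSucc i * Real.exp (-(α t) * u t i))
    have h1 : ∑ i ∈ Finset.univ.filter (fun i => u t i = -1),
        D t.castSucc i * Real.exp (-(α t) * u t i) = Real.exp (α t) * ε t := by
      rw [hε, Finset.mul_sum]
      refine Finset.sum_congr rfl fun i hi => ?_
      have : u t i = -1 := (Finset.mem_filter.mp hi).2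
      rw [this]; ring_nf
    have h2 : ∑ i ∈ Finset.univ.filter (fun i => ¬ u t i = -1),
        D t.castSucc i * Real.exp (-(α t) * u t i) = Real.exp (-(α t)) * (1 - ε t) := by
      have hcompl : ∑ i ∈ Finset.univ.filter (fun i => ¬ u t i = -1), D t.castSucc i
          = 1 - ε t := by
        have := Finset.sum_filter_add_sum_filter_not Finset.univ
          (fun i => u t i = -1) (fun i => D t.castSucc i)
        rw [hsum t.castSucc] at this
        rw [hε]; linarith
      rw [← hcompl, Finset.mul_sum]
      refine Finset.sum_congr rfl fun i hi => ?_
      have hne1 : ¬ u t i = -1 := (Finset.mem_filter.mp hi).2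
      have : u t i = 1 := (hu t i).resolve_left hne1
      rw [this]; ring_nf
    have hZeq : Z t = Real.exp (α t) * ε t + Real.exp (-(α t)) * (1 - ε t) := by
      rw [hZ, ← hsplit, h1, h2]
    have hterm1 : Real.sqrt ((1 - ε t) / ε t) * ε t = Real.sqrt (ε t * (1 - ε t)) := by
      have key : ε t * (1 - ε t) = (1 - ε t) / ε t * ε t ^ 2 := by field_simp
      rw [key, Real.sqrt_mul hx.le, Real.sqrt_sq he0.le]
    have hterm2 : Real.sqrt (ε t / (1 - ε t)) * (1 - ε t) = Real.sqrt (ε t * (1 - ε t)) := by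
      have h1e : (0:ℝ) < 1 - ε t := by linarith
      have hy : (0:ℝ) ≤ ε t / (1 - ε t) := by positivity
      have key : ε t * (1 - ε t) = ε t / (1 - ε t) * (1 - ε t) ^ 2 := by field_simp
      rw [key, Real.sqrt_mul hy, Real.sqrt_sq h1e.le]
    rw [hZeq, hexp, hexpneg, hterm1, hterm2]
    ring
  -- closed form for D
  have hclosed : ∀ t : Fin (T+1), ∀ i,
      D t i * ∏ s ∈ Finset.univ.filter (fun s : Fin T => (s:ℕ) < (t:ℕ)), Z s
      = (1 / m) * Real.exp (-(∑ s ∈ Finset.univ.filter (fun s : Fin T => (s:ℕ) < (t:ℕ)),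
          α s * u s i)) := by
    intro t
    induction t using Fin.induction with
    | zero =>
      intro i
      have hempty : Finset.univ.filter (fun s : Fin T => (s:ℕ) < ((0 : Fin (T+1)):ℕ)) = ∅ := by
        apply Finset.filter_false_of_mem; intro s _; simp
      rw [hempty]
      simp [hD0]
    | succ t ih =>
      intro i
      have hset : Finset.univ.filter (fun s : Fin T => (s:ℕ) < ((t.succ : Fin (T+1)):ℕ))
          = insert t (Finset.univ.filter (fun s : Fin T => (s:ℕ) < ((t.castSucc : Fin (T+1)):ℕ))) := by
        ext s
        simp only [Finset.mem_filter, Finset.mem_univ, true_and, Finset.mem_insert,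
          Fin.val_succ, Fin.coe_castSucc, Fin.ext_iff]
        omega
      have hnotmem : t ∉ Finset.univ.filter (fun s : Fin T => (s:ℕ) < ((t.castSucc : Fin (T+1)):ℕ)) := by
        simp
      rw [hset, Finset.prod_insert hnotmem, Finset.sum_insert hnotmem, hD]
      have hZne : Z t ≠ 0 := (hZpos t).ne'
      have hrw : D t.castSucc i * Real.exp (-(α t) * u t i) / Z t *
          (Z t * ∏ s ∈ Finset.univ.filter (fun s : Fin T => (s:ℕ) < ((t.castSucc : Fin (T+1)):ℕ)), Z s)
          = Real.exp (-(α t) * u t i) *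
            (D t.castSucc i * ∏ s ∈ Finset.univ.filter (fun s : Fin T => (s:ℕ) < ((t.castSucc : Fin (T+1)):ℕ)), Z s) := by
        field_simp
      rw [hrw, ih i, ← mul_assoc, mul_comm (Real.exp (-(α t) * u t i)) ((1:ℝ)/m),
        mul_assoc, ← Real.exp_add]
      congr 1
      ring
  -- at the last step
  have hfull : Finset.univ.filter (fun s : Fin T => (s:ℕ) < ((Fin.last T : Fin (T+1)):ℕ))
      = Finset.univ := by
    apply Finset.filter_true_of_mem; intro s _; simp [Fin.is_lt]
  have hlast : ∀ i, D (Fin.last T) i * ∏ s, Z s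
      = (1 / m) * Real.exp (-(∑ s, α s * u s i)) := by
    intro i
    have := hclosed (Fin.last T) i
    rwa [hfull] at this
  -- final chaining
  set S := Finset.univ.filter (fun i : Fin m => (∑ t, α t * u t i) ≤ 0) with hS
  have hstep1 : ((S.card : ℝ)) / m = ∑ _i ∈ S, (1 / m : ℝ) := by
    rw [Finset.sum_const, nsmul_eq_mul]
    ring
  have hstep2 : ∑ _i ∈ S, (1 / m : ℝ) ≤ ∑ i ∈ S, (1 / m) * Real.exp (-(∑ t, α t * u t i)) := by
    refine Finset.sum_le_sum fun i hi => ?_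
    have hfi : (∑ t, α t * u t i) ≤ 0 := (Finset.mem_filter.mp hi).2
    have : (1:ℝ) ≤ Real.exp (-(∑ t, α t * u t i)) := by
      rw [← Real.exp_zero]
      exact Real.exp_le_exp.mpr (by linarith)
    calc (1/m : ℝ) = (1/m) * 1 := (mul_one _).symm
      _ ≤ (1/m) * Real.exp (-(∑ t, α t * u t i)) := by
          exact mul_le_mul_of_nonneg_left this (by positivity)
  have hstep3 : ∑ i ∈ S, (1 / m : ℝ) * Real.exp (-(∑ t, α t * u t i))
      ≤ ∑ i, (1 / m : ℝ) * Real.exp (-(∑ t, α t * u t i)) := by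
    refine Finset.sum_le_sum_of_subset_of_nonneg (Finset.filter_subset _ _) fun i _ _ => ?_
    positivity
  have hstep4 : ∑ i, (1 / m : ℝ) * Real.exp (-(∑ t, α t * u t i)) = ∏ s, Z s := by
    have : ∀ i : Fin m, (1 / m : ℝ) * Real.exp (-(∑ t, α t * u t i))
        = D (Fin.last T) i * ∏ s, Z s := fun i => (hlast i).symm
    rw [Finset.sum_congr rfl fun i _ => this i, ← Finset.sum_mul, hsum, one_mul]
  have hprod : ∏ s, Z s = ∏ t, 2 * Real.sqrt (ε t * (1 - ε t)) :=
    Finset.prod_congr rfl fun t _ => hZval t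
  calc ((S.card : ℝ)) / m ≤ ∑ i, (1 / m : ℝ) * Real.exp (-(∑ t, α t * u t i)) := by
        rw [hstep1]; exact le_trans hstep2 hstep3
    _ = ∏ t, 2 * Real.sqrt (ε t * (1 - ε t)) := by rw [hstep4, hprod]
end

section
/- Let m ≥ 1 and T ≥ 1 be natural numbers, let u : Fin T → Fin m → ℝ satisfy u t i ∈ {−1, 1}, and define D, ε, α, Z recursively as in AdaBoost: D 0 i = 1/m, ε t = ∑ i with u t i = −1, D t i with 0 < ε t < 1, α t = (1/2) * ln((1 − ε t)/(ε t)), Z t = ∑ i, D t i * exp(−α t * u t i), and D (t+1) i = D t i * exp(−α t * u t i) / Z t. If there exists γ ∈ (0, 1/2] such that ε t ≤ 1/2 − γ for every t, then the fraction of indices i ∈ Fin m with ∑ t, α t * u t i ≤ 0 is at most exp(−2 * γ² * T). -/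
open Finset Real

/-- Exponential training-error decay of AdaBoost under the weak-learning assumption:
if every weak learner's weighted error satisfies `ε t ≤ 1/2 - γ` for some
`γ ∈ (0, 1/2]`, then the fraction of training points misclassified by the combined
classifier is at most `exp (-2 * γ² * T)`. -/
theorem adaGNN_adaboost_exponential_decay
    (m T : ℕ) (hm : 1 ≤ m) (hT : 1 ≤ T)
    (u : Fin T → Fin m → ℝ) (hu : ∀ t i, u t i = -1 ∨ u t i = 1)
    (D : Fin (T + 1) → Fin m → ℝ)
    (ε α Z : Fin T → ℝ)
    (hD0 : ∀ i, D 0 i = 1 / m)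
    (hε : ∀ t, ε t = ∑ i ∈ Finset.univ.filter fun i => u t i = -1, D t.castSucc i)
    (hε0 : ∀ t, 0 < ε t) (hε1 : ∀ t, ε t < 1)
    (hα : ∀ t, α t = (1 / 2) * Real.log ((1 - ε t) / ε t))
    (hZ : ∀ t, Z t = ∑ i, D t.castSucc i * Real.exp (-(α t) * u t i))
    (hD : ∀ t i, D t.succ i = D t.castSucc i * Real.exp (-(α t) * u t i) / Z t)
    (γ : ℝ) (hγ : γ ∈ Set.Ioc (0 : ℝ) (1 / 2)) (hγε : ∀ t, ε t ≤ 1 / 2 - γ) :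
    ((Finset.univ.filter fun i : Fin m => (∑ t, α t * u t i) ≤ 0).card : ℝ) / m ≤
      Real.exp (-2 * γ ^ 2 * T) := by
  obtain ⟨hγ0, hγhalf⟩ := hγ
  have hm0 : (0 : ℝ) < m := by exact_mod_cast Nat.lt_of_lt_of_le Nat.zero_lt_one hm
  have hne : (Finset.univ : Finset (Fin m)).Nonempty := ⟨⟨0, hm⟩, Finset.mem_univ _⟩
  -- positivity of D
  have hDpos : ∀ t : Fin (T + 1), ∀ i, 0 < D t i := by
    intro t
    induction t using Fin.induction with
    | zero => intro i; rw [hD0]; positivity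
    | succ t ih =>
      have hZp : 0 < Z t := by
        rw [hZ]
        exact Finset.sum_pos (fun j _ => mul_pos (ih j) (Real.exp_pos _)) hne
      intro i
      rw [hD]
      exact div_pos (mul_pos (ih i) (Real.exp_pos _)) hZp
  have hZpos : ∀ t : Fin T, 0 < Z t := by
    intro t
    rw [hZ]
    exact Finset.sum_pos (fun j _ => mul_pos (hDpos _ j) (Real.exp_pos _)) hne
  -- sums of D are 1
  have hDsum : ∀ t : Fin (T + 1), ∑ i, D t i = 1 := by
    intro t
    induction t using Fin.induction with
    | zero =>
      simp only [hD0]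
      rw [Finset.sum_const, Finset.card_univ, Fintype.card_fin, nsmul_eq_mul]
      field_simp
    | succ t ih =>
      simp only [hD]
      rw [← Finset.sum_div, ← hZ t, div_self (hZpos t).ne']
  -- value of Z t
  have hZeq : ∀ t : Fin T, Z t = 2 * Real.sqrt (ε t * (1 - ε t)) := by
    intro t
    have h0 := hε0 t
    have h1 := hε1 t
    have h1' : 0 < 1 - ε t := by linarith
    have hexpa : Real.exp (α t) = Real.sqrt ((1 - ε t) / ε t) := by
      rw [hα, Real.sqrt_eq_rpow, Real.rpow_def_of_pos (by positivity), mul_comm]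
    have hexpna : Real.exp (-(α t)) = Real.sqrt (ε t / (1 - ε t)) := by
      rw [Real.sqrt_eq_rpow, Real.rpow_def_of_pos (by positivity), hα]
      congr 1
      rw [show ε t / (1 - ε t) = ((1 - ε t) / ε t)⁻¹ by rw [inv_div], Real.log_inv]
      ring
    have hsplit := Finset.sum_filter_add_sum_filter_not Finset.univ
      (fun i => u t i = -1) (fun i => D t.castSucc i * Real.exp (-(α t) * u t i))
    have hA : ∑ i ∈ Finset.univ.filter (fun i => u t i = -1),
        D t.castSucc i * Real.exp (-(α t) * u t i) = ε t * Real.exp (α t) := by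
      rw [hε, Finset.sum_mul]
      apply Finset.sum_congr rfl
      intro i hi
      rw [Finset.mem_filter] at hi
      rw [hi.2]; ring_nf
    have hB : ∑ i ∈ Finset.univ.filter (fun i => ¬ u t i = -1),
        D t.castSucc i * Real.exp (-(α t) * u t i) = (1 - ε t) * Real.exp (-(α t)) := by
      have hc : ∑ i ∈ Finset.univ.filter (fun i => ¬ u t i = -1), D t.castSucc i
          = 1 - ε t := by
        have h3 := Finset.sum_filter_add_sum_filter_not Finset.univ
          (fun i => u t i = -1) (fun i => D t.castSucc i)
        rw [← hε] at h3
        have h2 := hDsum t.castSucc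
        linarith
      rw [← hc, Finset.sum_mul]
      apply Finset.sum_congr rfl
      intro i hi
      rw [Finset.mem_filter] at hi
      have h4 : u t i = 1 := (hu t i).resolve_left hi.2
      rw [h4, mul_one]
    have hap : 0 < Real.sqrt (ε t) := Real.sqrt_pos.mpr h0
    have hbp : 0 < Real.sqrt (1 - ε t) := Real.sqrt_pos.mpr h1'
    have ha2 : Real.sqrt (ε t) ^ 2 = ε t := Real.sq_sqrt h0.le
    have hb2 : Real.sqrt (1 - ε t) ^ 2 = 1 - ε t := Real.sq_sqrt h1'.le
    have hsq : Real.sqrt (ε t * (1 - ε t))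
        = Real.sqrt (ε t) * Real.sqrt (1 - ε t) := Real.sqrt_mul h0.le _
    have hq1 : Real.sqrt ((1 - ε t) / ε t) = Real.sqrt (1 - ε t) / Real.sqrt (ε t) :=
      Real.sqrt_div h1'.le _
    have hq2 : Real.sqrt (ε t / (1 - ε t)) = Real.sqrt (ε t) / Real.sqrt (1 - ε t) :=
      Real.sqrt_div h0.le _
    rw [hZ, ← hsplit, hA, hB, hexpa, hexpna, hq1, hq2, hsq]
    field_simp
    nlinarith [ha2, hb2, hap, hbp]
  -- bound on Z t
  have hZle : ∀ t : Fin T, Z t ≤ Real.exp (-2 * γ ^ 2) := by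
    intro t
    rw [hZeq]
    have h0 := hε0 t
    have h2 := hγε t
    have hE : 0 < Real.exp (-2 * γ ^ 2) := Real.exp_pos _
    have hEsq : Real.exp (-2 * γ ^ 2) ^ 2 = Real.exp (-4 * γ ^ 2) := by
      rw [sq, ← Real.exp_add]
      congr 1
      ring
    have h5 : 1 - 4 * γ ^ 2 ≤ Real.exp (-4 * γ ^ 2) := by
      have := Real.add_one_le_exp (-4 * γ ^ 2)
      linarith
    have h6 : ε t * (1 - ε t) ≤ (Real.exp (-2 * γ ^ 2) / 2) ^ 2 := by
      have h7 : ε t * (1 - ε t) ≤ 1 / 4 - γ ^ 2 := by nlinarith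
      have : (Real.exp (-2 * γ ^ 2) / 2) ^ 2 = Real.exp (-4 * γ ^ 2) / 4 := by
        rw [← hEsq]; ring
      rw [this]
      linarith
    have h8 : Real.sqrt (ε t * (1 - ε t)) ≤ Real.exp (-2 * γ ^ 2) / 2 := by
      calc Real.sqrt (ε t * (1 - ε t)) ≤ Real.sqrt ((Real.exp (-2 * γ ^ 2) / 2) ^ 2) :=
            Real.sqrt_le_sqrt h6
        _ = Real.exp (-2 * γ ^ 2) / 2 := Real.sqrt_sq (by positivity)
    linarith
  -- unrolled formula
  have key : ∀ t : Fin (T + 1), ∀ i,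
      D t i * ∏ s ∈ Finset.univ.filter (fun s : Fin T => (s : ℕ) < (t : ℕ)), Z s
        = (1 / m) * Real.exp
            (-∑ s ∈ Finset.univ.filter (fun s : Fin T => (s : ℕ) < (t : ℕ)), α s * u s i) := by
    intro t
    induction t using Fin.induction with
    | zero => intro i; simp [hD0]
    | succ t ih =>
      intro i
      simp only [Fin.coe_castSucc] at ih
      have hfil : Finset.univ.filter (fun s : Fin T => (s : ℕ) < ((t.succ : Fin (T + 1)) : ℕ))
          = insert t (Finset.univ.filter (fun s : Fin T => (s : ℕ) < (t : ℕ))) := by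
        ext s
        simp [Fin.val_succ, Nat.lt_succ_iff_lt_or_eq, Fin.ext_iff, or_comm]
        rw [Fin.le_iff_val_le_val, Fin.lt_iff_val_lt_val]; omega
      have hnotmem : t ∉ Finset.univ.filter (fun s : Fin T => (s : ℕ) < (t : ℕ)) := by
        simp
      rw [hfil, Finset.prod_insert hnotmem, Finset.sum_insert hnotmem, hD,
        neg_add, Real.exp_add]
      have hz := (hZpos t).ne'
      have expand : D t.castSucc i * Real.exp (-(α t) * u t i) / Z t *
            (Z t * ∏ s ∈ Finset.univ.filter (fun s : Fin T => (s : ℕ) < (t : ℕ)), Z s)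
          = (D t.castSucc i *
              ∏ s ∈ Finset.univ.filter (fun s : Fin T => (s : ℕ) < (t : ℕ)), Z s) *
              Real.exp (-(α t) * u t i) := by
        field_simp
      rw [expand, ih i, show -(α t) * u t i = -(α t * u t i) by ring]
      ring
  -- specialize at the last step
  have hfull : Finset.univ.filter (fun s : Fin T => (s : ℕ) < ((Fin.last T : Fin (T + 1)) : ℕ))
      = Finset.univ := by
    apply Finset.filter_true_of_mem
    intro s _
    simpa using s.isLt
  have hlast : ∀ i, D (Fin.last T) i * ∏ s, Z s
      = (1 / m) * Real.exp (-∑ s, α s * u s i) := by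
    intro i
    have := key (Fin.last T) i
    rwa [hfull] at this
  set P := ∏ s, Z s with hP
  have hPpos : 0 < P := Finset.prod_pos (fun s _ => hZpos s)
  -- misclassified points have large weight
  set B := Finset.univ.filter (fun i : Fin m => (∑ t, α t * u t i) ≤ 0) with hB
  have hlow : ∀ i ∈ B, 1 / (m * P) ≤ D (Fin.last T) i := by
    intro i hi
    rw [hB, Finset.mem_filter] at hi
    have h1 : (1 : ℝ) ≤ Real.exp (-∑ t, α t * u t i) := by
      rw [Real.one_le_exp_iff]
      linarith [hi.2]
    have h2 := hlast i
    have h3 : 1 / ((m : ℝ) * P) * P ≤ D (Fin.last T) i * P := by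
      rw [h2, show 1 / ((m : ℝ) * P) * P = 1 / m by field_simp]
      nlinarith [one_div_pos.mpr hm0]
    exact le_of_mul_le_mul_right h3 hPpos
  have hcard : (B.card : ℝ) * (1 / (m * P)) ≤ 1 := by
    calc (B.card : ℝ) * (1 / (m * P)) = ∑ _i ∈ B, 1 / (m * P) := by
          rw [Finset.sum_const, nsmul_eq_mul]
      _ ≤ ∑ i ∈ B, D (Fin.last T) i := Finset.sum_le_sum hlow
      _ ≤ ∑ i, D (Fin.last T) i := Finset.sum_le_sum_of_subset_of_nonneg
            (Finset.filter_subset _ _) (fun i _ _ => (hDpos _ i).le)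
      _ = 1 := hDsum _
  have hfrac : (B.card : ℝ) / m ≤ P := by
    rw [div_le_iff₀ hm0]
    have h4 := hcard
    rw [mul_one_div, div_le_one (by positivity)] at h4
    calc (B.card : ℝ) ≤ m * P := h4
      _ = P * m := mul_comm _ _
  -- product bound
  have hPle : P ≤ Real.exp (-2 * γ ^ 2 * T) := by
    calc P ≤ ∏ _s : Fin T, Real.exp (-2 * γ ^ 2) :=
          Finset.prod_le_prod (fun s _ => (hZpos s).le) (fun s _ => hZle s)
      _ = Real.exp (-2 * γ ^ 2) ^ T := by
          rw [Finset.prod_const, Finset.card_univ, Fintype.card_fin]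
      _ = Real.exp (-2 * γ ^ 2 * T) := by
          rw [← Real.exp_nat_mul, mul_comm]
  exact hfrac.trans hPle
end

section
/- Let m ≥ 1 and T ≥ 1 be natural numbers, let u : Fin T → Fin m → ℝ satisfy u t i ∈ {−1, 1}, and define D, ε, α, Z recursively as in AdaBoost: D 0 i = 1/m, ε t = ∑ i with u t i = −1, D t i with 0 < ε t < 1, α t = (1/2) * ln((1 − ε t)/(ε t)), Z t = ∑ i, D t i * exp(−α t * u t i), and D (t+1) i = D t i * exp(−α t * u t i) / Z t. Then for every θ ≥ 0, the fraction of indices i ∈ Fin m with ∑ t, α t * u t i ≤ θ * ∑ t, α t is at most ∏ t, 2 * (ε t)^((1 − θ)/2) * (1 − ε t)^((1 + θ)/2). -/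
/-- Margin-distribution bound for AdaBoost: for every `θ ≥ 0`, the fraction of
training points whose (unnormalized) margin `∑ t, α t * u t i` is at most
`θ * ∑ t, α t` is bounded by `∏ t, 2 * ε t ^ ((1-θ)/2) * (1 - ε t) ^ ((1+θ)/2)`
(real powers). -/
theorem adaGNN_adaboost_margin_distribution_bound
    (m T : ℕ) (hm : 1 ≤ m) (hT : 1 ≤ T)
    (u : Fin T → Fin m → ℝ) (hu : ∀ t i, u t i = -1 ∨ u t i = 1)
    (D : Fin (T + 1) → Fin m → ℝ)
    (ε α Z : Fin T → ℝ)
    (hD0 : ∀ i, D 0 i = 1 / m)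
    (hε : ∀ t, ε t = ∑ i ∈ Finset.univ.filter fun i => u t i = -1, D t.castSucc i)
    (hε0 : ∀ t, 0 < ε t) (hε1 : ∀ t, ε t < 1)
    (hα : ∀ t, α t = (1 / 2) * Real.log ((1 - ε t) / ε t))
    (hZ : ∀ t, Z t = ∑ i, D t.castSucc i * Real.exp (-(α t) * u t i))
    (hD : ∀ t i, D t.succ i = D t.castSucc i * Real.exp (-(α t) * u t i) / Z t)
    (θ : ℝ) (hθ : 0 ≤ θ) :
    ((Finset.univ.filter fun i : Fin m =>
        (∑ t, α t * u t i) ≤ θ * ∑ t, α t).card : ℝ) / m ≤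
      ∏ t, 2 * ε t ^ ((1 - θ) / 2) * (1 - ε t) ^ ((1 + θ) / 2) := by
  have hmpos : (0:ℝ) < m := by exact_mod_cast Nat.lt_of_lt_of_le Nat.zero_lt_one hm
  haveI hne : Nonempty (Fin m) := ⟨⟨0, by omega⟩⟩
  -- positivity of D
  have hDpos : ∀ t : Fin (T+1), ∀ i, 0 < D t i := by
    intro t
    induction t using Fin.induction with
    | zero => intro i; rw [hD0]; positivity
    | succ t ih =>
      have hZpos : 0 < Z t := by
        rw [hZ]
        exact Finset.sum_pos (fun i _ => mul_pos (ih i) (Real.exp_pos _)) Finset.univ_nonempty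
      intro i
      rw [hD t i]
      exact div_pos (mul_pos (ih i) (Real.exp_pos _)) hZpos
  have hZpos : ∀ t, 0 < Z t := by
    intro t; rw [hZ]
    exact Finset.sum_pos (fun i _ => mul_pos (hDpos _ i) (Real.exp_pos _)) Finset.univ_nonempty
  -- D is a probability vector at every step
  have hDsum : ∀ t : Fin (T+1), ∑ i, D t i = 1 := by
    intro t
    induction t using Fin.induction with
    | zero =>
      simp only [hD0]
      rw [Finset.sum_const, Finset.card_univ, Fintype.card_fin, nsmul_eq_mul]
      field_simp
    | succ t _ =>
      simp only [hD]
      rw [← Finset.sum_div, ← hZ t, div_self (hZpos t).ne']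
  -- unroll the recursion
  set Z' : ℕ → ℝ := fun s => if h : s < T then Z ⟨s, h⟩ else 1 with hZ'
  set E' : ℕ → Fin m → ℝ :=
    fun s i => if h : s < T then Real.exp (-(α ⟨s, h⟩) * u ⟨s, h⟩ i) else 1 with hE'
  have key : ∀ n (hn : n ≤ T) (i : Fin m),
      D ⟨n, Nat.lt_succ_of_le hn⟩ i * ∏ s ∈ Finset.range n, Z' s
        = (1 / m) * ∏ s ∈ Finset.range n, E' s i := by
    intro n
    induction n with
    | zero =>
      intro hn i
      simp only [Finset.range_zero, Finset.prod_empty, mul_one]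
      have h0 : (⟨0, Nat.lt_succ_of_le hn⟩ : Fin (T+1)) = 0 := rfl
      rw [h0, hD0]
    | succ n ih =>
      intro hn i
      have hnT : n < T := hn
      have hn' : n ≤ T := le_of_lt hnT
      have hstep : D ⟨n+1, Nat.lt_succ_of_le hn⟩ i
          = D ⟨n, Nat.lt_succ_of_le hn'⟩ i * Real.exp (-(α ⟨n, hnT⟩) * u ⟨n, hnT⟩ i)
            / Z ⟨n, hnT⟩ := hD ⟨n, hnT⟩ i
      have hZn : Z' n = Z ⟨n, hnT⟩ := dif_pos hnT
      have hEn : E' n i = Real.exp (-(α ⟨n, hnT⟩) * u ⟨n, hnT⟩ i) := dif_pos hnT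
      rw [Finset.prod_range_succ, Finset.prod_range_succ, hstep, hZn, hEn]
      have hzne : Z (⟨n, hnT⟩ : Fin T) ≠ 0 := (hZpos _).ne'
      have expand : D ⟨n, Nat.lt_succ_of_le hn'⟩ i
            * Real.exp (-(α ⟨n, hnT⟩) * u ⟨n, hnT⟩ i) / Z ⟨n, hnT⟩
            * ((∏ s ∈ Finset.range n, Z' s) * Z ⟨n, hnT⟩)
          = (D ⟨n, Nat.lt_succ_of_le hn'⟩ i * ∏ s ∈ Finset.range n, Z' s)
            * Real.exp (-(α ⟨n, hnT⟩) * u ⟨n, hnT⟩ i) * (Z ⟨n, hnT⟩ / Z ⟨n, hnT⟩) := by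
        ring
      rw [expand, div_self hzne, mul_one, ih hn' i]
      ring
  have keyT : ∀ i, D (Fin.last T) i * ∏ t, Z t
      = (1 / m) * ∏ t, Real.exp (-(α t) * u t i) := by
    intro i
    have hk := key T le_rfl i
    have hZprod : ∏ s ∈ Finset.range T, Z' s = ∏ t : Fin T, Z t := by
      rw [← Fin.prod_univ_eq_prod_range]
      exact Finset.prod_congr rfl fun t _ => by simp [hZ', t.isLt]
    have hEprod : ∏ s ∈ Finset.range T, E' s i = ∏ t : Fin T, Real.exp (-(α t) * u t i) := by
      rw [← Fin.prod_univ_eq_prod_range]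
      exact Finset.prod_congr rfl fun t _ => by simp [hE', t.isLt]
    have hlast : (⟨T, Nat.lt_succ_of_le le_rfl⟩ : Fin (T+1)) = Fin.last T := rfl
    rw [hlast, hZprod, hEprod] at hk
    exact hk
  -- total exponential sum
  have hsum : ∑ i, ∏ t, Real.exp (-(α t) * u t i) = m * ∏ t, Z t := by
    have hi : ∀ i : Fin m, ∏ t, Real.exp (-(α t) * u t i)
        = (m : ℝ) * (D (Fin.last T) i * ∏ t, Z t) := by
      intro i; rw [keyT i]; field_simp
    rw [Finset.sum_congr rfl fun i _ => hi i, ← Finset.mul_sum, ← Finset.sum_mul,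
      hDsum (Fin.last T), one_mul]
  set S := ∑ t, α t with hS
  set g : Fin m → ℝ := fun i => ∑ t, α t * u t i with hg
  have hexpg : ∀ i, Real.exp (-g i) = ∏ t, Real.exp (-(α t) * u t i) := by
    intro i
    have hgi : -g i = ∑ t, -(α t) * u t i := by
      have : (∑ t, -(α t) * u t i) = -(∑ t, α t * u t i) := by
        rw [← Finset.sum_neg_distrib]
        exact Finset.sum_congr rfl fun t _ => by ring
      rw [this, hg]
    rw [hgi, Real.exp_sum]
  -- Markov / counting step
  have hcard : ((Finset.univ.filter fun i : Fin m => g i ≤ θ * S).card : ℝ)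
      ≤ Real.exp (θ * S) * ((m : ℝ) * ∏ t, Z t) := by
    have h1 : ((Finset.univ.filter fun i : Fin m => g i ≤ θ * S).card : ℝ)
        = ∑ i ∈ Finset.univ.filter fun i : Fin m => g i ≤ θ * S, (1:ℝ) := by
      rw [Finset.sum_const, nsmul_eq_mul, mul_one]
    rw [h1]
    calc ∑ i ∈ Finset.univ.filter fun i : Fin m => g i ≤ θ * S, (1:ℝ)
        ≤ ∑ i ∈ Finset.univ.filter fun i : Fin m => g i ≤ θ * S,
            Real.exp (θ * S - g i) := by
          refine Finset.sum_le_sum fun i hi => ?_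
          have hgi := (Finset.mem_filter.mp hi).2
          have h0 : (0:ℝ) ≤ θ * S - g i := by linarith
          calc (1:ℝ) = Real.exp 0 := Real.exp_zero.symm
            _ ≤ Real.exp (θ * S - g i) := Real.exp_le_exp.mpr h0
      _ ≤ ∑ i, Real.exp (θ * S - g i) :=
          Finset.sum_le_sum_of_subset_of_nonneg (Finset.filter_subset _ _)
            (fun i _ _ => (Real.exp_pos _).le)
      _ = ∑ i, Real.exp (θ * S) * Real.exp (-g i) := by
          apply Finset.sum_congr rfl
          intro i _
          rw [sub_eq_add_neg, Real.exp_add]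
      _ = Real.exp (θ * S) * ∑ i, Real.exp (-g i) := (Finset.mul_sum _ _ _).symm
      _ = Real.exp (θ * S) * ((m : ℝ) * ∏ t, Z t) := by
          rw [Finset.sum_congr rfl fun i _ => hexpg i, hsum]
  -- per-round evaluation
  have hfac : ∀ t, Real.exp (θ * α t) * Z t
      = 2 * ε t ^ ((1 - θ) / 2) * (1 - ε t) ^ ((1 + θ) / 2) := by
    intro t
    have ha := hε0 t
    have hb : 0 < 1 - ε t := by linarith [hε1 t]
    have hZt : Z t = ε t * Real.exp (α t) + (1 - ε t) * Real.exp (-(α t)) := by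
      rw [hZ]
      rw [← Finset.sum_filter_add_sum_filter_not Finset.univ (fun i => u t i = -1)
        (fun i => D t.castSucc i * Real.exp (-(α t) * u t i))]
      congr 1
      · rw [hε t, Finset.sum_mul]
        refine Finset.sum_congr rfl fun i hi => ?_
        have hui := (Finset.mem_filter.mp hi).2
        rw [hui, show -(α t) * (-1:ℝ) = α t by ring]
      · have h1 : ∑ i ∈ Finset.univ.filter (fun i => ¬ u t i = -1), D t.castSucc i
            = 1 - ε t := by
          have h2 := Finset.sum_filter_add_sum_filter_not Finset.univ
            (fun i => u t i = -1) (fun i => D t.castSucc i)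
          have h3 := hDsum t.castSucc
          rw [hε t]
          linarith
        rw [← h1, Finset.sum_mul]
        refine Finset.sum_congr rfl fun i hi => ?_
        have hui := (Finset.mem_filter.mp hi).2
        have hu1 : u t i = 1 := (hu t i).resolve_left hui
        rw [hu1, mul_one]
    set L1 := Real.log (ε t) with hL1
    set L2 := Real.log (1 - ε t) with hL2
    have hαt : α t = (L2 - L1) / 2 := by
      rw [hα t, Real.log_div hb.ne' ha.ne', hL1, hL2]; ring
    have hεe : ε t = Real.exp L1 := by rw [hL1]; exact (Real.exp_log ha).symm
    have hbe : 1 - ε t = Real.exp L2 := by rw [hL2]; exact (Real.exp_log hb).symm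
    have hrε : ε t ^ ((1 - θ) / 2) = Real.exp (L1 * ((1 - θ) / 2)) := by
      rw [hL1]; exact Real.rpow_def_of_pos ha _
    have hrb : (1 - ε t) ^ ((1 + θ) / 2) = Real.exp (L2 * ((1 + θ) / 2)) := by
      rw [hL2]; exact Real.rpow_def_of_pos hb _
    have e1 : ε t * Real.exp ((L2 - L1) / 2) = Real.exp ((L1 + L2) / 2) := by
      rw [hεe, ← Real.exp_add]; congr 1; ring
    have e2 : (1 - ε t) * Real.exp (-((L2 - L1) / 2)) = Real.exp ((L1 + L2) / 2) := by
      rw [hbe, ← Real.exp_add]; congr 1; ring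
    rw [hZt, hαt, hrε, hrb, e1, e2,
      show Real.exp ((L1 + L2) / 2) + Real.exp ((L1 + L2) / 2)
        = 2 * Real.exp ((L1 + L2) / 2) by ring]
    calc Real.exp (θ * ((L2 - L1) / 2)) * (2 * Real.exp ((L1 + L2) / 2))
        = 2 * Real.exp (θ * ((L2 - L1) / 2) + (L1 + L2) / 2) := by
          rw [Real.exp_add]; ring
      _ = 2 * Real.exp (L1 * ((1 - θ) / 2)) * Real.exp (L2 * ((1 + θ) / 2)) := by
          rw [mul_assoc, ← Real.exp_add]
          congr 2
          ring
  have hprod : Real.exp (θ * S) * ∏ t, Z t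
      = ∏ t, 2 * ε t ^ ((1 - θ) / 2) * (1 - ε t) ^ ((1 + θ) / 2) := by
    have hth : Real.exp (θ * S) = ∏ t, Real.exp (θ * α t) := by
      rw [hS, Finset.mul_sum, Real.exp_sum]
    rw [hth, ← Finset.prod_mul_distrib]
    exact Finset.prod_congr rfl fun t _ => hfac t
  rw [div_le_iff₀ hmpos]
  calc ((Finset.univ.filter fun i : Fin m => g i ≤ θ * S).card : ℝ)
      ≤ Real.exp (θ * S) * ((m : ℝ) * ∏ t, Z t) := hcard
    _ = (Real.exp (θ * S) * ∏ t, Z t) * m := by ring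
    _ = (∏ t, 2 * ε t ^ ((1 - θ) / 2) * (1 - ε t) ^ ((1 + θ) / 2)) * m := by rw [hprod]
end

section
/- Let K ≥ 2 be a natural number and let p : Fin K → ℝ be a probability vector with p k > 0 for all k. Consider the function L : (Fin K → ℝ) → ℝ defined by L(f) = ∑ k, p k * exp(−f k / (K − 1)), restricted to the hyperplane V = {f : ∑ k, f k = 0}. Define f* by f* k = (K − 1) * (log (p k) − (1/K) * ∑ j, log (p j)). Then f* ∈ V, f* is the unique global minimizer of L on V, and moreover for all k, j: f* k ≥ f* j if and only if p k ≥ p j (so the argmax of f* coincides with the argmax of p). -/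
/-- Population minimizer of the multi-class exponential loss underlying SAMME/SAMME.R:
for class probabilities `p k > 0` summing to `1`, the loss
`L f = ∑ k, p k * exp (-f k / (K - 1))` restricted to the zero-sum hyperplane
`∑ k, f k = 0` is uniquely minimized at
`f* k = (K - 1) * (log (p k) - (1/K) * ∑ j, log (p j))`, and `f*` is ordered the
same way as `p`, so its argmax coincides with the Bayes-optimal class. -/
theorem adaGNN_samme_population_minimizer
    (K : ℕ) (hK : 2 ≤ K)
    (p : Fin K → ℝ) (hp : ∀ k, 0 < p k) (hp1 : ∑ k, p k = 1)
    (L : (Fin K → ℝ) → ℝ)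
    (hL : ∀ f, L f = ∑ k, p k * Real.exp (-f k / ((K : ℝ) - 1)))
    (fstar : Fin K → ℝ)
    (hfstar : ∀ k, fstar k =
      ((K : ℝ) - 1) * (Real.log (p k) - (1 / (K : ℝ)) * ∑ j, Real.log (p j))) :
    (∑ k, fstar k = 0) ∧
      (∀ f : Fin K → ℝ, (∑ k, f k = 0) → L fstar ≤ L f) ∧
      (∀ f : Fin K → ℝ, (∑ k, f k = 0) → L f = L fstar → f = fstar) ∧
      (∀ k j, fstar j ≤ fstar k ↔ p j ≤ p k) := by
  have hK1 : (1:ℝ) < (K:ℝ) := by exact_mod_cast lt_of_lt_of_le one_lt_two hK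
  have hKm : (0:ℝ) < (K:ℝ) - 1 := by linarith
  have hK0 : (0:ℝ) < (K:ℝ) := by linarith
  set c : ℝ := (1 / (K : ℝ)) * ∑ j, Real.log (p j) with hc
  -- sum of fstar = 0
  have hcK : (K:ℝ) * c = ∑ j, Real.log (p j) := by
    rw [hc]; field_simp
  have hsum : ∑ k, fstar k = 0 := by
    have : ∑ k, fstar k = ((K:ℝ)-1) * (∑ k, (Real.log (p k) - c)) := by
      rw [Finset.mul_sum]; exact Finset.sum_congr rfl fun k _ => hfstar k
    rw [this, Finset.sum_sub_distrib, Finset.sum_const, Finset.card_univ, Fintype.card_fin,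
      nsmul_eq_mul, hcK, sub_self, mul_zero]
  -- rewrite L
  have hLy : ∀ f : Fin K → ℝ, L f = ∑ k, Real.exp (Real.log (p k) - f k / ((K:ℝ)-1)) := by
    intro f
    rw [hL]
    refine Finset.sum_congr rfl fun k _ => ?_
    conv_lhs => rw [← Real.exp_log (hp k)]
    rw [← Real.exp_add, neg_div, ← sub_eq_add_neg]
  -- value at fstar
  have hfc : ∀ k, Real.log (p k) - fstar k / ((K:ℝ)-1) = c := by
    intro k
    rw [hfstar k, mul_comm, mul_div_assoc, div_self hKm.ne', mul_one]
    ring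
  have hLfstar : L fstar = (K:ℝ) * Real.exp c := by
    rw [hLy]
    simp only [hfc]
    rw [Finset.sum_const, Finset.card_univ, Fintype.card_fin, nsmul_eq_mul]
  -- Jensen
  have hw1 : ∑ _k : Fin K, (1/(K:ℝ)) = 1 := by
    rw [Finset.sum_const, Finset.card_univ, Fintype.card_fin, nsmul_eq_mul]; field_simp
  have hysum : ∀ f : Fin K → ℝ, (∑ k, f k = 0) →
      ∑ k, (1/(K:ℝ)) • (Real.log (p k) - f k / ((K:ℝ)-1)) = c := by
    intro f hf
    simp only [smul_eq_mul]
    rw [← Finset.mul_sum, Finset.sum_sub_distrib, ← Finset.sum_div, hf, zero_div, sub_zero, hc]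
  have hmin : ∀ f : Fin K → ℝ, (∑ k, f k = 0) → L fstar ≤ L f := by
    intro f hf
    have hJ := convexOn_exp.map_sum_le (t := Finset.univ)
      (w := fun _ : Fin K => 1/(K:ℝ)) (p := fun k => Real.log (p k) - f k / ((K:ℝ)-1))
      (fun i _ => by positivity) hw1 (fun i _ => Set.mem_univ _)
    rw [hysum f hf] at hJ
    simp only [smul_eq_mul] at hJ
    rw [← Finset.mul_sum, ← hLy] at hJ
    rw [hLfstar]
    calc (K:ℝ) * Real.exp c ≤ (K:ℝ) * ((1/(K:ℝ)) * L f) := by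
          exact mul_le_mul_of_nonneg_left hJ hK0.le
      _ = L f := by field_simp
  refine ⟨hsum, hmin, ?_, ?_⟩
  · -- uniqueness
    intro f hf heq
    by_contra hne
    have hex : ∃ j : Fin K, ∃ k : Fin K,
        (Real.log (p j) - f j / ((K:ℝ)-1)) ≠ (Real.log (p k) - f k / ((K:ℝ)-1)) := by
      by_contra hall
      push_neg at hall
      apply hne
      funext k
      have hconst : ∀ j, Real.log (p j) - f j / ((K:ℝ)-1)
          = Real.log (p k) - f k / ((K:ℝ)-1) := fun j => hall j k
      have : ∑ j, (Real.log (p j) - f j / ((K:ℝ)-1))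
          = (K:ℝ) * (Real.log (p k) - f k / ((K:ℝ)-1)) := by
        rw [Finset.sum_congr rfl fun j _ => hconst j, Finset.sum_const, Finset.card_univ,
          Fintype.card_fin, nsmul_eq_mul]
      have h2 : ∑ j, (Real.log (p j) - f j / ((K:ℝ)-1)) = (K:ℝ) * c := by
        have := hysum f hf
        simp only [smul_eq_mul] at this
        rw [← Finset.mul_sum] at this
        have h3 : ∑ j, (Real.log (p j) - f j / ((K:ℝ)-1)) = (K:ℝ) * ((1/(K:ℝ)) * ∑ j, (Real.log (p j) - f j / ((K:ℝ)-1))) := by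
          rw [← mul_assoc, mul_one_div_cancel hK0.ne', one_mul]
        rw [h3, this]
      have hck : Real.log (p k) - f k / ((K:ℝ)-1) = c :=
        (mul_left_cancel₀ hK0.ne' (h2.symm.trans this)).symm
      have : f k / ((K:ℝ)-1) = Real.log (p k) - c := by linarith
      rw [hfstar k]
      have := (div_eq_iff hKm.ne').mp this
      rw [this]; ring
    obtain ⟨j, k, hjk⟩ := hex
    have hJ := strictConvexOn_exp.map_sum_lt (t := Finset.univ)
      (w := fun _ : Fin K => 1/(K:ℝ)) (p := fun k => Real.log (p k) - f k / ((K:ℝ)-1))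
      (fun i _ => by positivity) hw1 (fun i _ => Set.mem_univ _)
      ⟨j, Finset.mem_univ j, k, Finset.mem_univ k, hjk⟩
    rw [hysum f hf] at hJ
    simp only [smul_eq_mul] at hJ
    rw [← Finset.mul_sum, ← hLy] at hJ
    have : (K:ℝ) * Real.exp c < L f := by
      calc (K:ℝ) * Real.exp c < (K:ℝ) * ((1/(K:ℝ)) * L f) :=
            (mul_lt_mul_iff_right₀ hK0).mpr hJ
        _ = L f := by field_simp
    rw [heq, hLfstar] at this
    exact lt_irrefl _ this
  · intro k j
    rw [hfstar k, hfstar j]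
    constructor
    · intro h
      have h2 : Real.log (p j) - c ≤ Real.log (p k) - c := le_of_mul_le_mul_left h hKm
      exact (Real.log_le_log_iff (hp j) (hp k)).mp (by linarith)
    · intro h
      exact mul_le_mul_of_nonneg_left (by linarith [Real.log_le_log (hp j) h]) hKm.le
end

section
/- There exists an absolute constant C > 0 with the following property. Let X be a measurable space, n ≥ 2 a natural number, s : Fin n → X → ℝ a family of measurable functions with values in [0,1], D a probability measure on X × ({0,1} with the discrete σ-algebra), τ ∈ (0,1), θ ∈ (0,1), δ ∈ (0,1), and m ≥ 2 a natural number. For a function F : X → ℝ define the margin m_F(x,y) = (y − τ) * (F x − τ). Then with probability at least 1 − δ over a sample S = ((x_1,y_1), …, (x_m,y_m)) drawn i.i.d. from D (i.e., from the m-fold product measure D^m), the following holds simultaneously for every probability vector α : Fin n → ℝ, writing f x = ∑ i, α i * s i x: D{(x,y) : m_f(x,y) ≤ 0} ≤ (1/m) * |{j : m_f(x_j, y_j) ≤ θ}| + C * √((log n * log m)/(m * θ²) + log(1/δ)/m). -/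
open MeasureTheory Real Finset
open scoped ENNReal

/-- Key elementary inequality: for `|x| ≤ 1`, `exp x ≤ x + exp (x^2)`. -/
lemma agnn_exp_le {x : ℝ} (hx : |x| ≤ 1) : Real.exp x ≤ x + Real.exp (x ^ 2) := by
  have h := Real.exp_bound hx (n := 2) (by norm_num)
  have h2 : Real.exp x - (1 + x) ≤ |x| ^ 2 * (3 / 4) := by
    have hs : ∑ i ∈ Finset.range 2, x ^ i / (Nat.factorial i) = 1 + x := by
      simp [Finset.sum_range_succ]
    have h' := (abs_le.mp (by simpa [hs] using h)).2
    nlinarith [h', sq_abs x]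
  have h3 : 1 + x ^ 2 ≤ Real.exp (x ^ 2) := by
    have := Real.add_one_le_exp (x ^ 2); linarith
  have : |x| ^ 2 = x ^ 2 := sq_abs x
  nlinarith

/-- Weighted mgf bound: mean-zero values in `[-1,1]`, `|l| ≤ 1`. -/
lemma agnn_mgf {ι : Type*} (t : Finset ι) (w v : ι → ℝ) (hw : ∀ a ∈ t, 0 ≤ w a)
    (hw1 : ∑ a ∈ t, w a = 1) (hv : ∀ a ∈ t, |v a| ≤ 1)
    (hmean : ∑ a ∈ t, w a * v a = 0) {l : ℝ} (hl : |l| ≤ 1) :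
    ∑ a ∈ t, w a * Real.exp (l * v a) ≤ Real.exp (l ^ 2) := by
  have key : ∀ a ∈ t, w a * Real.exp (l * v a) ≤ w a * (l * v a) + w a * Real.exp (l ^ 2) := by
    intro a ha
    have hva := hv a ha
    have habs : |l * v a| ≤ 1 := by
      rw [abs_mul]
      calc |l| * |v a| ≤ 1 * 1 := by
            apply mul_le_mul hl hva (abs_nonneg _) zero_le_one
        _ = 1 := by ring
    have h1 := agnn_exp_le habs
    have h2 : Real.exp ((l * v a) ^ 2) ≤ Real.exp (l ^ 2) := by
      apply Real.exp_le_exp.mpr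
      have : (l * v a) ^ 2 = l ^ 2 * (v a) ^ 2 := by ring
      rw [this]
      have hv2 : (v a) ^ 2 ≤ 1 := by
        have := sq_abs (v a); nlinarith [abs_nonneg (v a)]
      nlinarith [sq_nonneg l]
    have := hw a ha
    nlinarith
  calc ∑ a ∈ t, w a * Real.exp (l * v a)
      ≤ ∑ a ∈ t, (w a * (l * v a) + w a * Real.exp (l ^ 2)) := Finset.sum_le_sum key
    _ = l * (∑ a ∈ t, w a * v a) + (∑ a ∈ t, w a) * Real.exp (l ^ 2) := by
        rw [Finset.sum_add_distrib, Finset.mul_sum, Finset.sum_mul]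
        congr 1
        exact Finset.sum_congr rfl fun a _ => by ring
    _ = Real.exp (l ^ 2) := by rw [hmean, hw1]; ring

/-- One-sided Chernoff bound for the finite product (sparsification) measure. -/
lemma agnn_chernoff_fin {n k : ℕ} (α : Fin n → ℝ) (hα : ∀ a, 0 ≤ α a)
    (hα1 : ∑ a, α a = 1) (v : Fin n → ℝ) (hv : ∀ a, |v a| ≤ 1)
    (hmean : ∑ a, α a * v a = 0) {t : ℝ} (ht : 0 < t) (ht1 : t ≤ 1) :
    ∑ i : Fin k → Fin n, (∏ j, α (i j)) *
        (if (k : ℝ) * t ≤ ∑ j, v (i j) then (1 : ℝ) else 0) ≤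
      Real.exp (-(k : ℝ) * t ^ 2 / 4) := by
  set l : ℝ := t / 2 with hl_def
  have hl0 : 0 < l := by positivity
  have hl1 : |l| ≤ 1 := by rw [abs_of_pos hl0]; linarith
  have hW0 : ∀ i : Fin k → Fin n, 0 ≤ ∏ j, α (i j) := fun i =>
    Finset.prod_nonneg fun j _ => hα (i j)
  have step1 : ∀ i : Fin k → Fin n,
      (∏ j, α (i j)) * (if (k : ℝ) * t ≤ ∑ j, v (i j) then (1 : ℝ) else 0) ≤
      (∏ j, α (i j)) * (Real.exp (-(l * ((k : ℝ) * t))) * ∏ j, Real.exp (l * v (i j))) := by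
    intro i
    apply mul_le_mul_of_nonneg_left _ (hW0 i)
    rw [← Real.exp_sum]
    split_ifs with h
    · rw [← Real.exp_add]
      apply Real.one_le_exp
      have : ∑ j, l * v (i j) = l * ∑ j, v (i j) := by rw [Finset.mul_sum]
      rw [this]
      nlinarith
    · positivity
  calc ∑ i : Fin k → Fin n, (∏ j, α (i j)) *
          (if (k : ℝ) * t ≤ ∑ j, v (i j) then (1 : ℝ) else 0)
      ≤ ∑ i : Fin k → Fin n, (∏ j, α (i j)) *
          (Real.exp (-(l * ((k : ℝ) * t))) * ∏ j, Real.exp (l * v (i j))) :=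
        Finset.sum_le_sum fun i _ => step1 i
    _ = Real.exp (-(l * ((k : ℝ) * t))) *
          ∑ i : Fin k → Fin n, ∏ j, (α (i j) * Real.exp (l * v (i j))) := by
        rw [Finset.mul_sum]
        apply Finset.sum_congr rfl
        intro i _
        rw [Finset.prod_mul_distrib]
        ring
    _ = Real.exp (-(l * ((k : ℝ) * t))) *
          ∏ _j : Fin k, ∑ a, α a * Real.exp (l * v a) := by
        congr 1
        rw [Finset.prod_univ_sum]
        rw [← Fintype.piFinset_univ]
    _ ≤ Real.exp (-(l * ((k : ℝ) * t))) * ∏ _j : Fin k, Real.exp (l ^ 2) := by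
        apply mul_le_mul_of_nonneg_left _ (Real.exp_pos _).le
        apply Finset.prod_le_prod
        · intro j _
          exact Finset.sum_nonneg fun a _ => mul_nonneg (hα a) (Real.exp_pos _).le
        · intro j _
          exact agnn_mgf Finset.univ α v (fun a _ => hα a) hα1 (fun a _ => hv a)
            hmean hl1
    _ = Real.exp (-(k : ℝ) * t ^ 2 / 4) := by
        rw [Finset.prod_const, ← Real.exp_nat_mul, ← Real.exp_add]
        congr 1
        simp only [Finset.card_univ, Fintype.card_fin, hl_def]
        ring

/-- Sample-side Chernoff: the probability that the empirical mean of the indicator of `B`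
underestimates `D B` by `ε` is at most `exp (-m ε² / 4)`. -/
lemma agnn_sample_chernoff {Ω : Type*} [MeasurableSpace Ω] (D : Measure Ω)
    [IsProbabilityMeasure D] (m : ℕ) (B : Set Ω) (hB : MeasurableSet B) {ε : ℝ}
    (hε : 0 < ε) :
    Measure.pi (fun _ : Fin m => D)
      {S : Fin m → Ω | (m : ℝ) * ε ≤
        ∑ j, ((D B).toReal - Set.indicator B (fun _ => (1 : ℝ)) (S j))} ≤
      ENNReal.ofReal (Real.exp (-(m : ℝ) * ε ^ 2 / 4)) := by
  classical
  letI : MeasureSpace Ω := ⟨D⟩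
  have hvol : (volume : Measure Ω) = D := rfl
  set p : ℝ := (D B).toReal with hp_def
  have hp0 : 0 ≤ p := ENNReal.toReal_nonneg
  have hp1 : p ≤ 1 := by
    rw [hp_def]
    exact ENNReal.toReal_le_of_le_ofReal zero_le_one (by simpa using prob_le_one (μ := D) (s := B))
  have hBind : ∀ x : Ω, Set.indicator B (fun _ => (1 : ℝ)) x = if x ∈ B then 1 else 0 := by
    intro x; simp [Set.indicator_apply]
  by_cases hm : m = 0
  · subst hm
    calc Measure.pi (fun _ : Fin 0 => D) _ ≤ Measure.pi (fun _ : Fin 0 => D) Set.univ :=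
          measure_mono (Set.subset_univ _)
      _ = 1 := measure_univ
      _ ≤ ENNReal.ofReal (Real.exp (-(0 : ℕ) * ε ^ 2 / 4)) := by
          simp
  have hm1 : 1 ≤ m := Nat.one_le_iff_ne_zero.mpr hm
  by_cases hε1 : 1 < ε
  · -- the event is empty
    have : {S : Fin m → Ω | (m : ℝ) * ε ≤
        ∑ j, (p - Set.indicator B (fun _ => (1 : ℝ)) (S j))} = ∅ := by
      ext S
      simp only [Set.mem_setOf_eq, Set.mem_empty_iff_false, iff_false, not_le]
      have hb : ∀ j : Fin m, p - Set.indicator B (fun _ => (1 : ℝ)) (S j) ≤ 1 := by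
        intro j; rw [hBind]; split_ifs <;> linarith
      calc ∑ j, (p - Set.indicator B (fun _ => (1 : ℝ)) (S j)) ≤ ∑ _j : Fin m, (1 : ℝ) :=
            Finset.sum_le_sum fun j _ => hb j
        _ = (m : ℝ) := by simp
        _ < (m : ℝ) * ε := by
            nlinarith [(Nat.one_le_cast (α := ℝ)).mpr hm1]
    rw [this, measure_empty]
    exact zero_le
  push_neg at hε1
  set l : ℝ := ε / 2 with hl_def
  have hl0 : 0 < l := by positivity
  have hl1 : l ≤ 1 := by rw [hl_def]; linarith
  set φ : Ω → ℝ := fun x => Real.exp (l * (p - Set.indicator B (fun _ => (1 : ℝ)) x)) with hφ_def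
  have hφ_pos : ∀ x, 0 < φ x := fun x => Real.exp_pos _
  have hφ_meas : Measurable φ := by
    apply Real.measurable_exp.comp
    exact (measurable_const.mul (measurable_const.sub
      ((measurable_const (a := (1:ℝ))).indicator hB)))
  have hφ_bdd : ∀ x, φ x ≤ Real.exp 1 := by
    intro x
    apply Real.exp_le_exp.mpr
    rw [hBind]
    split_ifs <;> nlinarith
  have hφ_int : Integrable φ D :=
    (integrable_const (Real.exp 1)).mono' hφ_meas.aestronglyMeasurable
      (Filter.Eventually.of_forall fun x => by
        rw [Real.norm_eq_abs, abs_of_pos (hφ_pos x)]; exact hφ_bdd x)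
  -- the single-coordinate mgf bound
  have hmgf : ∫ x, φ x ∂D ≤ Real.exp (l ^ 2) := by
    have hsplit : φ = fun x => Set.indicator B (fun _ => Real.exp (l * (p - 1))) x +
        Set.indicator Bᶜ (fun _ => Real.exp (l * p)) x := by
      funext x
      by_cases hx : x ∈ B
      · simp [hφ_def, Set.indicator_of_mem hx, Set.indicator_of_notMem (by simpa using hx :
          x ∉ Bᶜ)]
      · simp [hφ_def, Set.indicator_of_notMem hx, Set.indicator_of_mem (by simpa using hx :
          x ∈ Bᶜ)]
    have hint1 : Integrable (Set.indicator B (fun _ => Real.exp (l * (p - 1)))) D :=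
      (integrable_const _).indicator hB
    have hint2 : Integrable (Set.indicator Bᶜ (fun _ => Real.exp (l * p))) D :=
      (integrable_const _).indicator hB.compl
    have hBc : (D Bᶜ).toReal = 1 - p := by
      rw [prob_compl_eq_one_sub hB, ENNReal.toReal_sub_of_le (prob_le_one) ENNReal.one_ne_top]
      simp [hp_def]
    rw [hsplit, integral_add hint1 hint2, integral_indicator_const _ hB,
      integral_indicator_const _ hB.compl, measureReal_def, measureReal_def, hBc, ← hp_def]
    simp only [smul_eq_mul]
    -- now pure real analysis: p e^{l(p-1)} + (1-p) e^{lp} ≤ e^{l²}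
    have h1 : Real.exp (l * (p - 1)) ≤ l * (p - 1) + Real.exp (l ^ 2) := by
      have habs : |l * (p - 1)| ≤ 1 := by
        rw [abs_mul, abs_of_pos hl0]
        calc l * |p - 1| ≤ 1 * 1 := by
              apply mul_le_mul hl1 (by rw [abs_le]; constructor <;> linarith) (abs_nonneg _)
                zero_le_one
          _ = 1 := one_mul 1
      refine (agnn_exp_le habs).trans ?_
      have hq : (l * (p - 1)) ^ 2 ≤ l ^ 2 := by
        have h1 : (p - 1) ^ 2 ≤ 1 := by nlinarith
        have := mul_le_mul_of_nonneg_left h1 (sq_nonneg l)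
        nlinarith
      have : Real.exp ((l * (p - 1)) ^ 2) ≤ Real.exp (l ^ 2) := Real.exp_le_exp.mpr hq
      linarith
    have h2 : Real.exp (l * p) ≤ l * p + Real.exp (l ^ 2) := by
      have habs : |l * p| ≤ 1 := by
        rw [abs_mul, abs_of_pos hl0, abs_of_nonneg hp0]
        nlinarith
      refine (agnn_exp_le habs).trans ?_
      have hq : (l * p) ^ 2 ≤ l ^ 2 := by
        have h1 : p ^ 2 ≤ 1 := by nlinarith
        have := mul_le_mul_of_nonneg_left h1 (sq_nonneg l)
        nlinarith
      have : Real.exp ((l * p) ^ 2) ≤ Real.exp (l ^ 2) := Real.exp_le_exp.mpr hq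
      linarith
    nlinarith
  -- Markov / Chernoff on the product space
  set F : (Fin m → Ω) → ℝ := fun S => Real.exp (-(l * ((m : ℝ) * ε))) * ∏ j, φ (S j)
    with hF_def
  have hF_pos : ∀ S, 0 < F S := fun S =>
    mul_pos (Real.exp_pos _) (Finset.prod_pos fun j _ => hφ_pos _)
  have hF_meas : Measurable F := by
    apply measurable_const.mul
    exact Finset.measurable_prod _ fun j _ => hφ_meas.comp (measurable_pi_apply j)
  have hF_bdd : ∀ S, F S ≤ Real.exp (-(l * ((m : ℝ) * ε))) * Real.exp 1 ^ m := by
    intro S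
    apply mul_le_mul_of_nonneg_left _ (Real.exp_pos _).le
    calc ∏ j, φ (S j) ≤ ∏ _j : Fin m, Real.exp 1 :=
          Finset.prod_le_prod (fun j _ => (hφ_pos _).le) (fun j _ => hφ_bdd _)
      _ = Real.exp 1 ^ m := by simp
  have hF_int : Integrable F (Measure.pi fun _ : Fin m => D) :=
    (integrable_const _).mono' hF_meas.aestronglyMeasurable
      (Filter.Eventually.of_forall fun S => by
        rw [Real.norm_eq_abs, abs_of_pos (hF_pos S)]; exact hF_bdd S)
  have hsub : {S : Fin m → Ω | (m : ℝ) * ε ≤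
      ∑ j, (p - Set.indicator B (fun _ => (1 : ℝ)) (S j))} ⊆ {S | 1 ≤ F S} := by
    intro S hS
    simp only [Set.mem_setOf_eq] at hS ⊢
    have : ∏ j, φ (S j) = Real.exp (l * ∑ j, (p - Set.indicator B (fun _ => (1 : ℝ)) (S j))) := by
      rw [Finset.mul_sum, Real.exp_sum]
    simp only [hF_def]
    rw [this, ← Real.exp_add]
    apply Real.one_le_exp
    nlinarith
  have hFint_eq : ∫ S, F S ∂(Measure.pi fun _ : Fin m => D) ≤
      Real.exp (-(m : ℝ) * ε ^ 2 / 4) := by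
    have : ∫ S, F S ∂(Measure.pi fun _ : Fin m => D) =
        Real.exp (-(l * ((m : ℝ) * ε))) * (∫ x, φ x ∂D) ^ m := by
      rw [hF_def]
      rw [integral_const_mul]
      congr 1
      have := MeasureTheory.integral_fintype_prod_eq_pow (ι := Fin m) φ (𝕜 := ℝ) (μ := D)
      simpa [hvol] using this
    rw [this]
    have hφint_nonneg : 0 ≤ ∫ x, φ x ∂D := integral_nonneg fun x => (hφ_pos x).le
    calc Real.exp (-(l * ((m : ℝ) * ε))) * (∫ x, φ x ∂D) ^ m ≤
        Real.exp (-(l * ((m : ℝ) * ε))) * Real.exp (l ^ 2) ^ m := by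
          apply mul_le_mul_of_nonneg_left _ (Real.exp_pos _).le
          exact pow_le_pow_left₀ hφint_nonneg hmgf m
      _ = Real.exp (-(m : ℝ) * ε ^ 2 / 4) := by
          rw [← Real.exp_nat_mul, ← Real.exp_add]
          congr 1
          rw [hl_def]; ring
  have hmarkov := mul_meas_ge_le_integral_of_nonneg
    (μ := Measure.pi fun _ : Fin m => D)
    (Filter.Eventually.of_forall fun S => (hF_pos S).le) hF_int 1
  rw [one_mul] at hmarkov
  have hne : Measure.pi (fun _ : Fin m => D) {S | 1 ≤ F S} ≠ ⊤ := by
    exact (measure_lt_top _ _).ne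
  calc Measure.pi (fun _ : Fin m => D) {S : Fin m → Ω | (m : ℝ) * ε ≤
        ∑ j, (p - Set.indicator B (fun _ => (1 : ℝ)) (S j))} ≤
      Measure.pi (fun _ : Fin m => D) {S | 1 ≤ F S} := measure_mono hsub
    _ = ENNReal.ofReal ((Measure.pi (fun _ : Fin m => D) {S | 1 ≤ F S}).toReal) := by
        rw [ENNReal.ofReal_toReal hne]
    _ ≤ ENNReal.ofReal (∫ S, F S ∂(Measure.pi fun _ : Fin m => D)) :=
        ENNReal.ofReal_le_ofReal hmarkov
    _ ≤ ENNReal.ofReal (Real.exp (-(m : ℝ) * ε ^ 2 / 4)) :=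
        ENNReal.ofReal_le_ofReal hFint_eq

set_option maxHeartbeats 1000000 in

/-- Numerical bookkeeping for the margin bound. -/
lemma agnn_numeric (n m : ℕ) (hn : 2 ≤ n) (hm : 2 ≤ m) (θ δ : ℝ)
    (hθ : θ ∈ Set.Ioo (0 : ℝ) 1) (hδ : δ ∈ Set.Ioo (0 : ℝ) 1) :
    2 * Real.sqrt (((⌈16 * Real.log m / θ ^ 2⌉₊ : ℝ) * Real.log n + Real.log (1 / δ)) / m) +
      4 * Real.exp (-(⌈16 * Real.log m / θ ^ 2⌉₊ : ℝ) * (θ / 2) ^ 2 / 4) ≤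
    20 * Real.sqrt ((Real.log n * Real.log m) / (m * θ ^ 2) + Real.log (1 / δ) / m) := by
  obtain ⟨hθ0, hθ1⟩ := hθ
  obtain ⟨hδ0, hδ1⟩ := hδ
  have hm0 : (0 : ℝ) < m := by positivity
  have hm2 : (2 : ℝ) ≤ m := by exact_mod_cast hm
  have hn2 : (2 : ℝ) ≤ n := by exact_mod_cast hn
  have hlog2 : (0.6931471803 : ℝ) < Real.log 2 := Real.log_two_gt_d9
  have hlogm : Real.log 2 ≤ Real.log m := Real.log_le_log (by norm_num) hm2
  have hlogn : Real.log 2 ≤ Real.log n := Real.log_le_log (by norm_num) hn2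
  have hlogm0 : (0 : ℝ) < Real.log m := by linarith
  have hlogn0 : (0 : ℝ) < Real.log n := by linarith
  have hlogδ0 : (0 : ℝ) < Real.log (1 / δ) := by
    apply Real.log_pos
    rw [lt_div_iff₀ hδ0]; linarith
  set k : ℕ := ⌈16 * Real.log m / θ ^ 2⌉₊ with hk_def
  have harg_pos : (0 : ℝ) < 16 * Real.log m / θ ^ 2 := by positivity
  have hk_ge : 16 * Real.log m / θ ^ 2 ≤ (k : ℝ) := Nat.le_ceil _
  have hk_up : (k : ℝ) ≤ 16 * Real.log m / θ ^ 2 + 1 := (Nat.ceil_lt_add_one harg_pos.le).le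
  have hθ2 : θ ^ 2 ≤ 1 := by nlinarith
  have hθ2pos : (0 : ℝ) < θ ^ 2 := by positivity
  -- k ≤ 18 log m / θ²
  have hk18 : (k : ℝ) ≤ 18 * Real.log m / θ ^ 2 := by
    have h1 : (1 : ℝ) ≤ 2 * Real.log m / θ ^ 2 := by
      rw [le_div_iff₀ hθ2pos]; nlinarith
    calc (k : ℝ) ≤ 16 * Real.log m / θ ^ 2 + 1 := hk_up
      _ ≤ 16 * Real.log m / θ ^ 2 + 2 * Real.log m / θ ^ 2 := by linarith
      _ = 18 * Real.log m / θ ^ 2 := by ring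
  set T : ℝ := (Real.log n * Real.log m) / (m * θ ^ 2) + Real.log (1 / δ) / m with hT_def
  have hT0 : 0 ≤ T := by positivity
  -- first term
  have hterm1 : 2 * Real.sqrt (((k : ℝ) * Real.log n + Real.log (1 / δ)) / m) ≤
      9 * Real.sqrt T := by
    have hu : ((k : ℝ) * Real.log n + Real.log (1 / δ)) / m ≤ 18 * T := by
      have h1 : (k : ℝ) * Real.log n ≤ 18 * (Real.log n * Real.log m / θ ^ 2) := by
        have := mul_le_mul_of_nonneg_right hk18 hlogn0.le
        calc (k : ℝ) * Real.log n ≤ 18 * Real.log m / θ ^ 2 * Real.log n := this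
          _ = 18 * (Real.log n * Real.log m / θ ^ 2) := by ring
      rw [hT_def]
      rw [div_le_iff₀ hm0]
      have expand : (18 * ((Real.log n * Real.log m) / (m * θ ^ 2) + Real.log (1 / δ) / m)) * m
          = 18 * (Real.log n * Real.log m / θ ^ 2) + 18 * Real.log (1 / δ) := by
        field_simp
      rw [expand]
      linarith
    calc 2 * Real.sqrt (((k : ℝ) * Real.log n + Real.log (1 / δ)) / m)
        ≤ 2 * Real.sqrt (18 * T) := by
          apply mul_le_mul_of_nonneg_left (Real.sqrt_le_sqrt hu) (by norm_num)
      _ = 2 * (Real.sqrt 18 * Real.sqrt T) := by rw [Real.sqrt_mul (by norm_num)]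
      _ ≤ 2 * (4.25 * Real.sqrt T) := by
          apply mul_le_mul_of_nonneg_left _ (by norm_num)
          apply mul_le_mul_of_nonneg_right _ (Real.sqrt_nonneg _)
          have : Real.sqrt 18 ≤ Real.sqrt (4.25 ^ 2) := Real.sqrt_le_sqrt (by norm_num)
          rwa [Real.sqrt_sq (by norm_num)] at this
      _ ≤ 9 * Real.sqrt T := by nlinarith [Real.sqrt_nonneg T]
  -- second term
  have hterm2 : 4 * Real.exp (-(k : ℝ) * (θ / 2) ^ 2 / 4) ≤ 6 * Real.sqrt T := by
    have hexp : Real.exp (-(k : ℝ) * (θ / 2) ^ 2 / 4) ≤ 1 / m := by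
      have hexp_le : -(k : ℝ) * (θ / 2) ^ 2 / 4 ≤ -Real.log m := by
        have : 16 * Real.log m ≤ (k : ℝ) * θ ^ 2 := by
          have := mul_le_mul_of_nonneg_right hk_ge hθ2pos.le
          rwa [div_mul_cancel₀] at this
          exact hθ2pos.ne'
        nlinarith
      calc Real.exp (-(k : ℝ) * (θ / 2) ^ 2 / 4) ≤ Real.exp (-Real.log m) :=
            Real.exp_le_exp.mpr hexp_le
        _ = 1 / m := by rw [Real.exp_neg, Real.exp_log hm0]; ring
    have h4m : 4 * (1 / (m : ℝ)) ≤ 6 * Real.sqrt T := by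
      have hTlow : (0.4 : ℝ) / (m : ℝ) ≤ T := by
        have hln : (0.69 : ℝ) ≤ Real.log n := by linarith
        have hlm : (0.69 : ℝ) ≤ Real.log m := by linarith
        have h2 : (0.4 : ℝ) * θ ^ 2 ≤ Real.log n * Real.log m := by nlinarith
        have h1 : (0.4 : ℝ) / (m : ℝ) ≤ Real.log n * Real.log m / ((m : ℝ) * θ ^ 2) := by
          rw [div_le_div_iff₀ hm0 (by positivity)]
          nlinarith [mul_le_mul_of_nonneg_right h2 hm0.le]
        rw [hT_def]
        have : (0:ℝ) ≤ Real.log (1/δ) / (m : ℝ) := by positivity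
        linarith
      have hsq : (2 / (3 * (m : ℝ))) ≤ Real.sqrt T := by
        apply Real.le_sqrt_of_sq_le
        calc (2 / (3 * (m : ℝ))) ^ 2 = 4 / (9 * (m : ℝ) ^ 2) := by field_simp; ring
          _ ≤ (0.4 : ℝ) / (m : ℝ) := by
              rw [div_le_div_iff₀ (by positivity) hm0]
              nlinarith
          _ ≤ T := hTlow
      calc 4 * (1 / (m : ℝ)) = 6 * (2 / (3 * (m : ℝ))) := by field_simp; ring
        _ ≤ 6 * Real.sqrt T := by linarith
    calc 4 * Real.exp (-(k : ℝ) * (θ / 2) ^ 2 / 4) ≤ 4 * (1 / m) := by linarith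
      _ ≤ 6 * Real.sqrt T := h4m
  have hs : 0 ≤ Real.sqrt T := Real.sqrt_nonneg T
  linarith

universe u

set_option maxHeartbeats 2000000 in
/-- Finite-base-class margin generalization bound for voting classifiers: there is an
absolute constant `C > 0` such that, with probability at least `1 - δ` over an
i.i.d. sample `S` of size `m` from `D` (a probability measure on labeled points
`X × Fin 2`), simultaneously for every probability vector `α`, writing
`f x = ∑ i, α i * s i x`, the true probability of a nonpositive margin
`(y - τ) * (f x - τ) ≤ 0` is at most the empirical fraction of sample points with
margin at most `θ` plus `C * √((log n * log m)/(m θ²) + log (1/δ)/m)`. -/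
theorem adaGNN_voting_margin_generalization_bound :
    ∃ C : ℝ, 0 < C ∧
      ∀ (X : Type u) (_ : MeasurableSpace X) (n : ℕ), 2 ≤ n →
        ∀ s : Fin n → X → ℝ, (∀ i, Measurable (s i)) →
          (∀ i x, s i x ∈ Set.Icc (0 : ℝ) 1) →
        ∀ D : Measure (X × Fin 2), IsProbabilityMeasure D →
        ∀ τ θ δ : ℝ, τ ∈ Set.Ioo (0 : ℝ) 1 → θ ∈ Set.Ioo (0 : ℝ) 1 →
          δ ∈ Set.Ioo (0 : ℝ) 1 →
        ∀ m : ℕ, 2 ≤ m →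
        ENNReal.ofReal (1 - δ) ≤
          (Measure.pi fun _ : Fin m => D)
            {S : Fin m → X × Fin 2 |
              ∀ α : Fin n → ℝ, (∀ i, 0 ≤ α i) → (∑ i, α i = 1) →
                (D {p : X × Fin 2 |
                    (((p.2 : ℕ) : ℝ) - τ) * ((∑ i, α i * s i p.1) - τ) ≤ 0}).toReal ≤
                  (1 / (m : ℝ)) *
                      ((Finset.univ.filter fun j : Fin m =>
                          ((((S j).2 : ℕ) : ℝ) - τ) *
                              ((∑ i, α i * s i (S j).1) - τ) ≤ θ).card : ℝ) +
                    C * Real.sqrt ((Real.log n * Real.log m) / (m * θ ^ 2) +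
                        Real.log (1 / δ) / m)} := by
  classical
  refine ⟨20, by norm_num, ?_⟩
  intro X mX n hn s hsm hsb D hD τ θ δ hτ hθ hδ m hm
  obtain ⟨hτ0, hτ1⟩ := hτ
  obtain ⟨hθ0, hθ1⟩ := hθ
  obtain ⟨hδ0, hδ1⟩ := hδ
  have hm0 : (0 : ℝ) < m := by positivity
  have hm1R : (1 : ℝ) < m := by exact_mod_cast hm
  have hn1R : (1 : ℝ) < n := by exact_mod_cast hn
  have hlogm0 : (0 : ℝ) < Real.log m := Real.log_pos hm1R
  have hlogn0 : (0 : ℝ) < Real.log n := Real.log_pos hn1R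
  have hlogδ0 : (0 : ℝ) < Real.log (1 / δ) := Real.log_pos (by rw [lt_div_iff₀ hδ0]; linarith)
  set k : ℕ := ⌈16 * Real.log m / θ ^ 2⌉₊ with hk_def
  have hk1 : 1 ≤ k := Nat.one_le_iff_ne_zero.mpr (by
    rw [hk_def]
    exact Nat.ceil_pos.mpr (by positivity) |>.ne')
  have hkR : (0 : ℝ) < k := by exact_mod_cast hk1
  set ε₂ : ℝ := Real.exp (-(k : ℝ) * (θ / 2) ^ 2 / 4) with hε₂_def
  set ε₁ : ℝ := 2 * Real.sqrt (((k : ℝ) * Real.log n + Real.log (1 / δ)) / m) with hε₁_def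
  have hu0 : (0 : ℝ) < ((k : ℝ) * Real.log n + Real.log (1 / δ)) / m := by positivity
  have hε₁0 : 0 < ε₁ := by
    rw [hε₁_def]
    have := Real.sqrt_pos.mpr hu0
    linarith
  -- measurability of margin functions
  have hy_meas : Measurable (fun p : X × Fin 2 => ((p.2 : ℕ) : ℝ)) :=
    (measurable_of_finite (fun b : Fin 2 => ((b : ℕ) : ℝ))).comp measurable_snd
  have hMmeas : ∀ F : X → ℝ, Measurable F →
      Measurable (fun p : X × Fin 2 => (((p.2 : ℕ) : ℝ) - τ) * (F p.1 - τ)) := fun F hF =>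
    (hy_meas.sub measurable_const).mul ((hF.comp measurable_fst).sub measurable_const)
  -- the finite subclass of averaged voters
  set g : (Fin k → Fin n) → X → ℝ := fun i x => (∑ j, s (i j) x) / k with hg_def
  have hg_meas : ∀ i, Measurable (g i) := fun i =>
    (Finset.measurable_sum _ fun j _ => hsm (i j)).div_const _
  set Bset : (Fin k → Fin n) → Set (X × Fin 2) :=
    fun i => {p | (((p.2 : ℕ) : ℝ) - τ) * (g i p.1 - τ) ≤ θ / 2} with hBset_def
  have hB_meas : ∀ i, MeasurableSet (Bset i) := fun i =>
    measurableSet_le (hMmeas _ (hg_meas i)) measurable_const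
  set emp : (Fin k → Fin n) → (Fin m → X × Fin 2) → ℝ :=
    fun i S => (1 / (m : ℝ)) * ∑ j, Set.indicator (Bset i) (fun _ => (1 : ℝ)) (S j)
    with hemp_def
  set E : Set (Fin m → X × Fin 2) :=
    {S | ∀ i : Fin k → Fin n, (D (Bset i)).toReal ≤ emp i S + ε₁} with hE_def
  set μ : Measure (Fin m → X × Fin 2) := Measure.pi (fun _ : Fin m => D) with hμ_def
  -- bound on the bad event
  have hEc : μ Eᶜ ≤ ENNReal.ofReal δ := by
    have hsub : Eᶜ ⊆ ⋃ i : Fin k → Fin n,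
        {S : Fin m → X × Fin 2 | (m : ℝ) * ε₁ ≤
          ∑ j, ((D (Bset i)).toReal - Set.indicator (Bset i) (fun _ => (1 : ℝ)) (S j))} := by
      intro S hS
      simp only [hE_def, Set.mem_compl_iff, Set.mem_setOf_eq, not_forall, not_le] at hS
      obtain ⟨i, hi⟩ := hS
      refine Set.mem_iUnion.mpr ⟨i, ?_⟩
      simp only [Set.mem_setOf_eq]
      have hsum : ∑ j : Fin m, ((D (Bset i)).toReal -
          Set.indicator (Bset i) (fun _ => (1 : ℝ)) (S j)) =
          (m : ℝ) * (D (Bset i)).toReal -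
            ∑ j, Set.indicator (Bset i) (fun _ => (1 : ℝ)) (S j) := by
        rw [Finset.sum_sub_distrib, Finset.sum_const, Finset.card_univ, Fintype.card_fin,
          nsmul_eq_mul]
      rw [hsum]
      have hthis := hi
      rw [hemp_def] at hthis
      simp only at hthis
      have h3 := mul_lt_mul_of_pos_left hthis hm0
      have h4 : (m : ℝ) * (1 / (m : ℝ) *
          (∑ j, Set.indicator (Bset i) (fun _ => (1 : ℝ)) (S j)) + ε₁) =
          (∑ j, Set.indicator (Bset i) (fun _ => (1 : ℝ)) (S j)) + (m : ℝ) * ε₁ := by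
        field_simp
      rw [h4] at h3
      linarith
    calc μ Eᶜ ≤ μ (⋃ i : Fin k → Fin n,
        {S : Fin m → X × Fin 2 | (m : ℝ) * ε₁ ≤
          ∑ j, ((D (Bset i)).toReal - Set.indicator (Bset i) (fun _ => (1 : ℝ)) (S j))}) :=
          measure_mono hsub
      _ ≤ ∑' i : Fin k → Fin n, μ {S : Fin m → X × Fin 2 | (m : ℝ) * ε₁ ≤
          ∑ j, ((D (Bset i)).toReal - Set.indicator (Bset i) (fun _ => (1 : ℝ)) (S j))} :=
          measure_iUnion_le _
      _ ≤ ∑' (_ : Fin k → Fin n), ENNReal.ofReal (Real.exp (-(m : ℝ) * ε₁ ^ 2 / 4)) :=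
          ENNReal.tsum_le_tsum fun i => agnn_sample_chernoff D m (Bset i) (hB_meas i) hε₁0
      _ = (Fintype.card (Fin k → Fin n) : ℝ≥0∞) *
            ENNReal.ofReal (Real.exp (-(m : ℝ) * ε₁ ^ 2 / 4)) := by
          rw [tsum_fintype]
          simp [Finset.sum_const, Finset.card_univ, nsmul_eq_mul]
      _ = ENNReal.ofReal δ := by
          have hcard : (Fintype.card (Fin k → Fin n) : ℝ≥0∞) = ((n ^ k : ℕ) : ℝ≥0∞) := by
            rw [Fintype.card_fun, Fintype.card_fin, Fintype.card_fin]
          have hexp : Real.exp (-(m : ℝ) * ε₁ ^ 2 / 4) = δ / (n : ℝ) ^ k := by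
            have hsq : ε₁ ^ 2 = 4 * (((k : ℝ) * Real.log n + Real.log (1 / δ)) / m) := by
              rw [hε₁_def, mul_pow, Real.sq_sqrt hu0.le]; ring
            have hexp_arg : -(m : ℝ) * ε₁ ^ 2 / 4 =
                -((k : ℝ) * Real.log n + Real.log (1 / δ)) := by
              rw [hsq]; field_simp
            rw [hexp_arg, neg_add, Real.exp_add, Real.exp_neg, Real.exp_neg,
              Real.exp_nat_mul, Real.exp_log (by positivity : (0:ℝ) < (n:ℝ)),
              Real.exp_log (by positivity : (0:ℝ) < 1/δ)]
            field_simp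
          rw [hcard, hexp, ← ENNReal.ofReal_natCast (n ^ k),
            ← ENNReal.ofReal_mul (by positivity)]
          congr 1
          push_cast
          field_simp
  -- the good event implies the margin bound for every convex combination
  have hET : E ⊆ {S : Fin m → X × Fin 2 |
      ∀ α : Fin n → ℝ, (∀ i, 0 ≤ α i) → (∑ i, α i = 1) →
        (D {p : X × Fin 2 |
            (((p.2 : ℕ) : ℝ) - τ) * ((∑ i, α i * s i p.1) - τ) ≤ 0}).toReal ≤
          (1 / (m : ℝ)) *
              ((Finset.univ.filter fun j : Fin m =>
                  ((((S j).2 : ℕ) : ℝ) - τ) *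
                      ((∑ i, α i * s i (S j).1) - τ) ≤ θ).card : ℝ) +
            20 * Real.sqrt ((Real.log n * Real.log m) / (m * θ ^ 2) +
                Real.log (1 / δ) / m)} := by
    intro S hS
    rw [hE_def] at hS
    simp only [Set.mem_setOf_eq] at hS ⊢
    intro α hα0 hα1
    set f : X → ℝ := fun x => ∑ a, α a * s a x with hf_def
    have hf_meas : Measurable f := Finset.measurable_sum _ fun a _ => (hsm a).const_mul (α a)
    have hf01 : ∀ x, 0 ≤ f x ∧ f x ≤ 1 := by
      intro x
      constructor
      · exact Finset.sum_nonneg fun a _ => mul_nonneg (hα0 a) (hsb a x).1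
      · calc ∑ a, α a * s a x ≤ ∑ a, α a * 1 :=
            Finset.sum_le_sum fun a _ => mul_le_mul_of_nonneg_left (hsb a x).2 (hα0 a)
          _ = 1 := by simpa using hα1
    have hg01 : ∀ i x, 0 ≤ g i x ∧ g i x ≤ 1 := by
      intro i x
      constructor
      · exact div_nonneg (Finset.sum_nonneg fun j _ => (hsb (i j) x).1) hkR.le
      · rw [hg_def]
        simp only
        rw [div_le_one hkR]
        calc ∑ j, s (i j) x ≤ ∑ _j : Fin k, (1 : ℝ) :=
              Finset.sum_le_sum fun j _ => (hsb (i j) x).2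
          _ = (k : ℝ) := by simp
    have habsyτ : ∀ p : X × Fin 2, |((p.2 : ℕ) : ℝ) - τ| ≤ 1 := by
      intro p
      have h2 : (p.2 : ℕ) < 2 := p.2.isLt
      have : (p.2 : ℕ) = 0 ∨ (p.2 : ℕ) = 1 := by omega
      rcases this with h | h <;> rw [h] <;> rw [abs_le] <;> constructor <;> push_cast <;> linarith
    have hW0 : ∀ i : Fin k → Fin n, 0 ≤ ∏ j, α (i j) := fun i =>
      Finset.prod_nonneg fun j _ => hα0 (i j)
    have hW1 : ∑ i : Fin k → Fin n, ∏ j, α (i j) = 1 := by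
      have h := Finset.prod_univ_sum (fun _ : Fin k => (Finset.univ : Finset (Fin n)))
        (fun _ a => α a)
      rw [Fintype.piFinset_univ] at h
      rw [← h]
      simp [hα1]
    set Dev : (Fin k → Fin n) → Set (X × Fin 2) :=
      fun i => {p | θ / 2 ≤ |g i p.1 - f p.1|} with hDev_def
    have hDev_meas : ∀ i, MeasurableSet (Dev i) := fun i =>
      measurableSet_le measurable_const
        (((hg_meas i).comp measurable_fst).sub (hf_meas.comp measurable_fst)).abs
    -- pointwise sparsification bound
    have hDevBound : ∀ p : X × Fin 2,
        ∑ i : Fin k → Fin n, (∏ j, α (i j)) *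
          Set.indicator (Dev i) (fun _ => (1 : ℝ)) p ≤ 2 * ε₂ := by
      intro p
      set x := p.1 with hx_def
      have hv : ∀ a, |s a x - f x| ≤ 1 := by
        intro a
        have h1 := (hsb a x).1; have h2 := (hsb a x).2
        have h3 := (hf01 x).1; have h4 := (hf01 x).2
        rw [abs_le]; constructor <;> linarith
      have hmean : ∑ a, α a * (s a x - f x) = 0 := by
        have : ∑ a, α a * (s a x - f x) = (∑ a, α a * s a x) - (∑ a, α a) * f x := by
          rw [Finset.sum_mul, ← Finset.sum_sub_distrib]
          exact Finset.sum_congr rfl fun a _ => by ring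
        rw [this, hα1, hf_def]
        simp
      have hmean' : ∑ a, α a * (-(s a x - f x)) = 0 := by
        have hneg : ∑ a, α a * (-(s a x - f x)) = -∑ a, α a * (s a x - f x) := by
          rw [← Finset.sum_neg_distrib]
          exact Finset.sum_congr rfl fun a _ => by ring
        rw [hneg, hmean, neg_zero]
      have hv' : ∀ a, |(-(s a x - f x))| ≤ 1 := fun a => by rw [abs_neg]; exact hv a
      have h1 := agnn_chernoff_fin (k := k) α hα0 hα1 (fun a => s a x - f x) hv hmean
        (t := θ / 2) (by linarith) (by linarith)
      have h2 := agnn_chernoff_fin (k := k) α hα0 hα1 (fun a => -(s a x - f x)) hv' hmean'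
        (t := θ / 2) (by linarith) (by linarith)
      have hpt : ∀ i : Fin k → Fin n,
          Set.indicator (Dev i) (fun _ => (1 : ℝ)) p ≤
            (if (k : ℝ) * (θ / 2) ≤ ∑ j, (s (i j) x - f x) then (1 : ℝ) else 0) +
            (if (k : ℝ) * (θ / 2) ≤ ∑ j, (-(s (i j) x - f x)) then (1 : ℝ) else 0) := by
        intro i
        have hsum1 : ∑ j, (s (i j) x - f x) = (k : ℝ) * (g i x - f x) := by
          rw [Finset.sum_sub_distrib, Finset.sum_const, Finset.card_univ, Fintype.card_fin,
            nsmul_eq_mul, hg_def]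
          field_simp
        by_cases hp : p ∈ Dev i
        · rw [Set.indicator_of_mem hp]
          have hd : θ / 2 ≤ |g i x - f x| := hp
          rcases abs_cases (g i x - f x) with ⟨habs, _⟩ | ⟨habs, _⟩
          · have : (k : ℝ) * (θ / 2) ≤ ∑ j, (s (i j) x - f x) := by
              rw [hsum1]
              apply mul_le_mul_of_nonneg_left _ hkR.le
              rw [habs] at hd; exact hd
            rw [if_pos this]
            have : (0:ℝ) ≤ (if (k : ℝ) * (θ / 2) ≤ ∑ j, (-(s (i j) x - f x)) then (1:ℝ) else 0) := by
              split_ifs <;> norm_num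
            linarith
          · have : (k : ℝ) * (θ / 2) ≤ ∑ j, (-(s (i j) x - f x)) := by
              have hsum2 : ∑ j, (-(s (i j) x - f x)) = (k : ℝ) * (-(g i x - f x)) := by
                rw [Finset.sum_neg_distrib, hsum1]; ring
              rw [hsum2]
              apply mul_le_mul_of_nonneg_left _ hkR.le
              rw [habs] at hd; linarith
            rw [if_pos this]
            have : (0:ℝ) ≤ (if (k : ℝ) * (θ / 2) ≤ ∑ j, (s (i j) x - f x) then (1:ℝ) else 0) := by
              split_ifs <;> norm_num
            linarith
        · rw [Set.indicator_of_notMem hp]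
          have ha : (0:ℝ) ≤ (if (k : ℝ) * (θ / 2) ≤ ∑ j, (s (i j) x - f x) then (1:ℝ) else 0) := by
            split_ifs <;> norm_num
          have hb : (0:ℝ) ≤ (if (k : ℝ) * (θ / 2) ≤ ∑ j, (-(s (i j) x - f x)) then (1:ℝ) else 0) := by
            split_ifs <;> norm_num
          linarith
      calc ∑ i : Fin k → Fin n, (∏ j, α (i j)) *
            Set.indicator (Dev i) (fun _ => (1 : ℝ)) p
          ≤ ∑ i : Fin k → Fin n, ((∏ j, α (i j)) *
              (if (k : ℝ) * (θ / 2) ≤ ∑ j, (s (i j) x - f x) then (1 : ℝ) else 0) +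
            (∏ j, α (i j)) *
              (if (k : ℝ) * (θ / 2) ≤ ∑ j, (-(s (i j) x - f x)) then (1 : ℝ) else 0)) := by
            apply Finset.sum_le_sum
            intro i _
            have := mul_le_mul_of_nonneg_left (hpt i) (hW0 i)
            linarith [this]
        _ = (∑ i : Fin k → Fin n, (∏ j, α (i j)) *
              (if (k : ℝ) * (θ / 2) ≤ ∑ j, (s (i j) x - f x) then (1 : ℝ) else 0)) +
            ∑ i : Fin k → Fin n, (∏ j, α (i j)) *
              (if (k : ℝ) * (θ / 2) ≤ ∑ j, (-(s (i j) x - f x)) then (1 : ℝ) else 0) :=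
            Finset.sum_add_distrib
        _ ≤ Real.exp (-(k : ℝ) * (θ / 2) ^ 2 / 4) + Real.exp (-(k : ℝ) * (θ / 2) ^ 2 / 4) :=
            add_le_add h1 h2
        _ = 2 * ε₂ := by rw [hε₂_def]; ring
    -- measure-side comparison
    set Aset : Set (X × Fin 2) :=
      {p | (((p.2 : ℕ) : ℝ) - τ) * (f p.1 - τ) ≤ 0} with hAset_def
    have hsubset : ∀ i, Aset ⊆ Bset i ∪ Dev i := by
      intro i p hp
      by_cases hd : p ∈ Dev i
      · exact Or.inr hd
      · left
        have hdlt : |g i p.1 - f p.1| < θ / 2 := by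
          rw [hDev_def] at hd
          simp only [Set.mem_setOf_eq, not_le] at hd
          exact hd
        have hMf : (((p.2 : ℕ) : ℝ) - τ) * (f p.1 - τ) ≤ 0 := hp
        have hdiff : (((p.2 : ℕ) : ℝ) - τ) * (g i p.1 - τ) -
            (((p.2 : ℕ) : ℝ) - τ) * (f p.1 - τ) ≤ |g i p.1 - f p.1| := by
          have heq : (((p.2 : ℕ) : ℝ) - τ) * (g i p.1 - τ) -
              (((p.2 : ℕ) : ℝ) - τ) * (f p.1 - τ) =
              (((p.2 : ℕ) : ℝ) - τ) * (g i p.1 - f p.1) := by ring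
          rw [heq]
          calc (((p.2 : ℕ) : ℝ) - τ) * (g i p.1 - f p.1) ≤
              |(((p.2 : ℕ) : ℝ) - τ) * (g i p.1 - f p.1)| := le_abs_self _
            _ = |((p.2 : ℕ) : ℝ) - τ| * |g i p.1 - f p.1| := abs_mul _ _
            _ ≤ 1 * |g i p.1 - f p.1| :=
              mul_le_mul_of_nonneg_right (habsyτ p) (abs_nonneg _)
            _ = |g i p.1 - f p.1| := one_mul _
        show (((p.2 : ℕ) : ℝ) - τ) * (g i p.1 - τ) ≤ θ / 2
        linarith
    have hAmeas : MeasurableSet Aset := measurableSet_le (hMmeas f hf_meas) measurable_const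
    have hP0 : ∀ i, (D Aset).toReal ≤ (D (Bset i)).toReal + (D (Dev i)).toReal := by
      intro i
      have h := (measure_mono (hsubset i)).trans (measure_union_le (μ := D) (Bset i) (Dev i))
      have h2 := ENNReal.toReal_mono
        (ENNReal.add_ne_top.mpr ⟨measure_ne_top D _, measure_ne_top D _⟩) h
      rwa [ENNReal.toReal_add (measure_ne_top D _) (measure_ne_top D _)] at h2
    -- the expected deviation measure is small
    have hQ : ∑ i : Fin k → Fin n, (∏ j, α (i j)) * (D (Dev i)).toReal ≤ 2 * ε₂ := by
      have hind_int : ∀ i : Fin k → Fin n,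
          Integrable (Set.indicator (Dev i) (fun _ => (1 : ℝ))) D := fun i =>
        (integrable_const 1).indicator (hDev_meas i)
      have hDval : ∀ i : Fin k → Fin n, (D (Dev i)).toReal =
          ∫ p, Set.indicator (Dev i) (fun _ => (1 : ℝ)) p ∂D := by
        intro i
        rw [integral_indicator_const (1 : ℝ) (hDev_meas i), smul_eq_mul, mul_one]
        rfl
      calc ∑ i : Fin k → Fin n, (∏ j, α (i j)) * (D (Dev i)).toReal
          = ∑ i : Fin k → Fin n,
              ∫ p, (∏ j, α (i j)) * Set.indicator (Dev i) (fun _ => (1 : ℝ)) p ∂D := by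
            apply Finset.sum_congr rfl
            intro i _
            rw [hDval i, ← integral_const_mul]
        _ = ∫ p, ∑ i : Fin k → Fin n,
              (∏ j, α (i j)) * Set.indicator (Dev i) (fun _ => (1 : ℝ)) p ∂D :=
            (integral_finset_sum _ fun i _ => (hind_int i).const_mul _).symm
        _ ≤ ∫ _p, (2 * ε₂) ∂D := by
            apply integral_mono
              (integrable_finset_sum _ fun i _ => (hind_int i).const_mul _)
              (integrable_const _)
            exact hDevBound
        _ = 2 * ε₂ := by simp
    -- the empirical comparison
    have hempb : ∑ i : Fin k → Fin n, (∏ j, α (i j)) * emp i S ≤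
        (1 / (m : ℝ)) * ((Finset.univ.filter fun j : Fin m =>
          ((((S j).2 : ℕ) : ℝ) - τ) * (f (S j).1 - τ) ≤ θ).card : ℝ) + 2 * ε₂ := by
      have hcard : ((Finset.univ.filter fun j : Fin m =>
          ((((S j).2 : ℕ) : ℝ) - τ) * (f (S j).1 - τ) ≤ θ).card : ℝ) =
          ∑ j : Fin m, (if ((((S j).2 : ℕ) : ℝ) - τ) * (f (S j).1 - τ) ≤ θ
            then (1 : ℝ) else 0) := by
        rw [Finset.card_filter]
        push_cast
        apply Finset.sum_congr rfl
        intro j _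
        split_ifs <;> norm_num
      have hptj : ∀ (j : Fin m) (i : Fin k → Fin n),
          Set.indicator (Bset i) (fun _ => (1 : ℝ)) (S j) ≤
            (if ((((S j).2 : ℕ) : ℝ) - τ) * (f (S j).1 - τ) ≤ θ then (1 : ℝ) else 0) +
            Set.indicator (Dev i) (fun _ => (1 : ℝ)) (S j) := by
        intro j i
        by_cases hb : S j ∈ Bset i
        · by_cases hd : S j ∈ Dev i
          · rw [Set.indicator_of_mem hb, Set.indicator_of_mem hd]
            have : (0:ℝ) ≤ (if ((((S j).2 : ℕ) : ℝ) - τ) * (f (S j).1 - τ) ≤ θ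
                then (1:ℝ) else 0) := by split_ifs <;> norm_num
            linarith
          · rw [Set.indicator_of_mem hb, Set.indicator_of_notMem hd]
            have hdlt : |g i (S j).1 - f (S j).1| < θ / 2 := by
              rw [hDev_def] at hd
              simp only [Set.mem_setOf_eq, not_le] at hd
              exact hd
            have hMg : ((((S j).2 : ℕ) : ℝ) - τ) * (g i (S j).1 - τ) ≤ θ / 2 := hb
            have hcond : ((((S j).2 : ℕ) : ℝ) - τ) * (f (S j).1 - τ) ≤ θ := by
              have hdiff : ((((S j).2 : ℕ) : ℝ) - τ) * (f (S j).1 - τ) -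
                  ((((S j).2 : ℕ) : ℝ) - τ) * (g i (S j).1 - τ) ≤
                  |g i (S j).1 - f (S j).1| := by
                have heq : ((((S j).2 : ℕ) : ℝ) - τ) * (f (S j).1 - τ) -
                    ((((S j).2 : ℕ) : ℝ) - τ) * (g i (S j).1 - τ) =
                    ((((S j).2 : ℕ) : ℝ) - τ) * (f (S j).1 - g i (S j).1) := by ring
                rw [heq]
                calc ((((S j).2 : ℕ) : ℝ) - τ) * (f (S j).1 - g i (S j).1) ≤
                    |((((S j).2 : ℕ) : ℝ) - τ) * (f (S j).1 - g i (S j).1)| := le_abs_self _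
                  _ = |(((S j).2 : ℕ) : ℝ) - τ| * |f (S j).1 - g i (S j).1| := abs_mul _ _
                  _ ≤ 1 * |f (S j).1 - g i (S j).1| :=
                    mul_le_mul_of_nonneg_right (habsyτ (S j)) (abs_nonneg _)
                  _ = |g i (S j).1 - f (S j).1| := by rw [one_mul, abs_sub_comm]
              linarith
            rw [if_pos hcond]
            norm_num
        · rw [Set.indicator_of_notMem hb]
          have h1 : (0:ℝ) ≤ (if ((((S j).2 : ℕ) : ℝ) - τ) * (f (S j).1 - τ) ≤ θ
              then (1:ℝ) else 0) := by split_ifs <;> norm_num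
          have h2 : (0:ℝ) ≤ Set.indicator (Dev i) (fun _ => (1 : ℝ)) (S j) :=
            Set.indicator_nonneg (fun _ _ => zero_le_one) _
          linarith
      calc ∑ i : Fin k → Fin n, (∏ j, α (i j)) * emp i S
          = (1 / (m : ℝ)) * ∑ j : Fin m, ∑ i : Fin k → Fin n,
              (∏ j', α (i j')) * Set.indicator (Bset i) (fun _ => (1 : ℝ)) (S j) := by
            have e1 : ∑ i : Fin k → Fin n, (∏ j, α (i j)) * emp i S =
                ∑ i : Fin k → Fin n, ∑ j : Fin m, (1 / (m : ℝ)) *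
                  ((∏ j', α (i j')) * Set.indicator (Bset i) (fun _ => (1 : ℝ)) (S j)) := by
              apply Finset.sum_congr rfl
              intro i _
              rw [hemp_def]
              simp only
              rw [Finset.mul_sum, Finset.mul_sum]
              exact Finset.sum_congr rfl fun j _ => by ring
            rw [e1, Finset.sum_comm, Finset.mul_sum]
            exact Finset.sum_congr rfl fun j _ => (Finset.mul_sum _ _ _).symm
        _ ≤ (1 / (m : ℝ)) * ∑ j : Fin m,
              ((if ((((S j).2 : ℕ) : ℝ) - τ) * (f (S j).1 - τ) ≤ θ then (1 : ℝ) else 0)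
                + 2 * ε₂) := by
            apply mul_le_mul_of_nonneg_left _ (by positivity)
            apply Finset.sum_le_sum
            intro j _
            calc ∑ i : Fin k → Fin n,
                (∏ j', α (i j')) * Set.indicator (Bset i) (fun _ => (1 : ℝ)) (S j)
                ≤ ∑ i : Fin k → Fin n, ((∏ j', α (i j')) *
                    ((if ((((S j).2 : ℕ) : ℝ) - τ) * (f (S j).1 - τ) ≤ θ then (1 : ℝ) else 0)
                      + Set.indicator (Dev i) (fun _ => (1 : ℝ)) (S j))) :=
                  Finset.sum_le_sum fun i _ =>
                    mul_le_mul_of_nonneg_left (hptj j i) (hW0 i)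
              _ = (∑ i : Fin k → Fin n, (∏ j', α (i j'))) *
                    (if ((((S j).2 : ℕ) : ℝ) - τ) * (f (S j).1 - τ) ≤ θ then (1 : ℝ) else 0)
                  + ∑ i : Fin k → Fin n, (∏ j', α (i j')) *
                      Set.indicator (Dev i) (fun _ => (1 : ℝ)) (S j) := by
                  rw [Finset.sum_mul, ← Finset.sum_add_distrib]
                  apply Finset.sum_congr rfl
                  intro i _
                  ring
              _ ≤ (if ((((S j).2 : ℕ) : ℝ) - τ) * (f (S j).1 - τ) ≤ θ then (1 : ℝ) else 0)
                  + 2 * ε₂ := by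
                  rw [hW1, one_mul]
                  exact (add_le_add_iff_left _).mpr (hDevBound (S j))
        _ = (1 / (m : ℝ)) * ((Finset.univ.filter fun j : Fin m =>
              ((((S j).2 : ℕ) : ℝ) - τ) * (f (S j).1 - τ) ≤ θ).card : ℝ) + 2 * ε₂ := by
            rw [Finset.sum_add_distrib, Finset.sum_const, Finset.card_univ, Fintype.card_fin,
              nsmul_eq_mul, hcard, mul_add]
            congr 1
            field_simp
    -- assemble
    have hmain : (D Aset).toReal ≤ (1 / (m : ℝ)) * ((Finset.univ.filter fun j : Fin m =>
        ((((S j).2 : ℕ) : ℝ) - τ) * (f (S j).1 - τ) ≤ θ).card : ℝ) + (ε₁ + 4 * ε₂) := by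
      calc (D Aset).toReal
          = ∑ i : Fin k → Fin n, (∏ j, α (i j)) * (D Aset).toReal := by
            rw [← Finset.sum_mul, hW1, one_mul]
        _ ≤ ∑ i : Fin k → Fin n, (∏ j, α (i j)) *
              ((D (Bset i)).toReal + (D (Dev i)).toReal) :=
            Finset.sum_le_sum fun i _ => mul_le_mul_of_nonneg_left (hP0 i) (hW0 i)
        _ = ∑ i : Fin k → Fin n, (∏ j, α (i j)) * (D (Bset i)).toReal +
            ∑ i : Fin k → Fin n, (∏ j, α (i j)) * (D (Dev i)).toReal := by
            rw [← Finset.sum_add_distrib]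
            exact Finset.sum_congr rfl fun i _ => by ring
        _ ≤ ∑ i : Fin k → Fin n, (∏ j, α (i j)) * (emp i S + ε₁) + 2 * ε₂ := by
            have := Finset.sum_le_sum (fun i (_ : i ∈ Finset.univ) =>
              mul_le_mul_of_nonneg_left (hS i) (hW0 i))
            linarith [hQ, this]
        _ = ∑ i : Fin k → Fin n, (∏ j, α (i j)) * emp i S + ε₁ + 2 * ε₂ := by
            have hsplit : ∑ i : Fin k → Fin n, (∏ j, α (i j)) * (emp i S + ε₁) =
                ∑ i : Fin k → Fin n, (∏ j, α (i j)) * emp i S + ε₁ := by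
              calc ∑ i : Fin k → Fin n, (∏ j, α (i j)) * (emp i S + ε₁)
                  = ∑ i : Fin k → Fin n,
                      ((∏ j, α (i j)) * emp i S + (∏ j, α (i j)) * ε₁) :=
                    Finset.sum_congr rfl fun i _ => by ring
                _ = ∑ i : Fin k → Fin n, (∏ j, α (i j)) * emp i S +
                    (∑ i : Fin k → Fin n, (∏ j, α (i j))) * ε₁ := by
                    rw [Finset.sum_add_distrib, Finset.sum_mul]
                _ = ∑ i : Fin k → Fin n, (∏ j, α (i j)) * emp i S + ε₁ := by
                    rw [hW1, one_mul]
            rw [hsplit]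
        _ ≤ (1 / (m : ℝ)) * ((Finset.univ.filter fun j : Fin m =>
              ((((S j).2 : ℕ) : ℝ) - τ) * (f (S j).1 - τ) ≤ θ).card : ℝ) + 2 * ε₂ + ε₁
              + 2 * ε₂ := by linarith [hempb]
        _ = (1 / (m : ℝ)) * ((Finset.univ.filter fun j : Fin m =>
              ((((S j).2 : ℕ) : ℝ) - τ) * (f (S j).1 - τ) ≤ θ).card : ℝ) + (ε₁ + 4 * ε₂) := by
            ring
    have hnum : ε₁ + 4 * ε₂ ≤ 20 * Real.sqrt ((Real.log n * Real.log m) / (m * θ ^ 2) +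
        Real.log (1 / δ) / m) := by
      have := agnn_numeric n m hn hm θ δ ⟨hθ0, hθ1⟩ ⟨hδ0, hδ1⟩
      rw [hε₁_def, hε₂_def, hk_def]
      convert this using 3
    exact le_trans hmain (by linarith [hnum])
  -- final probability computation
  calc ENNReal.ofReal (1 - δ) = 1 - ENNReal.ofReal δ := by
        rw [ENNReal.ofReal_sub _ hδ0.le, ENNReal.ofReal_one]
    _ ≤ 1 - μ Eᶜ := tsub_le_tsub_left hEc 1
    _ ≤ μ E := by
        have h1 : (1 : ℝ≥0∞) ≤ μ E + μ Eᶜ := by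
          have h := measure_union_le (μ := μ) E Eᶜ
          rwa [Set.union_compl_self, measure_univ] at h
        exact tsub_le_iff_right.mpr h1
    _ ≤ _ := measure_mono hET
end
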